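/- arXiv:0909.5408 — 4 statements merged into one kernel-verified Lean document; each statement's English description precedes it below -/
import Mathlib

section
/- Let K = ℂ(λ) be the field of rational functions over ℂ in the variable λ. There is no triple (a, b, z₁) ∈ K³ such that, with z₂ := z₁³ + a·z₁ + b, one has z₂ ≠ z₁, z₂³ + a·z₂ + b = z₁, and (3z₁² + a)(3z₂² + a) = λ. (There are no multiplier sections of period 2.) -/
open Polynomial

lemma units_eq_C {u : ℂ[X]} (h : IsUnit u) : ∃ d : ℂ, d ≠ 0 ∧ u = C d := by
  obtain ⟨d, hd, hC⟩ := Polynomial.isUnit_iff.mp h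
  exact ⟨d, hd.ne_zero, hC.symm⟩

lemma extract (F₁ F₂ L₁ B : ℂ[X]) (hB : B ≠ 0) (hF₁ : F₁ ≠ 0)
    (hcop : IsCoprime F₁ F₂) (hprod : F₁ * F₂ = L₁ * B ^ 4) (hL₁0 : L₁ ≠ 0)
    (hdvd : L₁ ∣ F₂) :
    ∃ (S T : ℂ[X]) (δ δ' θ : ℂ), δ ≠ 0 ∧ δ' ≠ 0 ∧ θ ≠ 0 ∧ S ≠ 0 ∧ T ≠ 0 ∧
      IsCoprime S T ∧ F₁ = C δ * S ^ 4 ∧ F₂ = C δ' * L₁ * T ^ 4 ∧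
      B ^ 2 = C θ * S ^ 2 * T ^ 2 := by
  obtain ⟨G, hG⟩ := hdvd
  have hFG : F₁ * G = B ^ 4 := by
    apply mul_left_cancel₀ hL₁0
    calc L₁ * (F₁ * G) = F₁ * (L₁ * G) := by ring
    _ = L₁ * B ^ 4 := by rw [← hG]; exact hprod
    _ = L₁ * B ^ 4 := rfl
  have hG0 : G ≠ 0 := by
    intro h; rw [h, mul_zero] at hFG
    exact (pow_ne_zero 4 hB) hFG.symm
  have hcopFG : IsCoprime F₁ G := by
    rw [hG] at hcop; exact hcop.of_mul_right_right
  have hu1 : IsUnit (gcd F₁ G) :=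
    hcopFG.isUnit_of_dvd' (gcd_dvd_left _ _) (gcd_dvd_right _ _)
  obtain ⟨S, hS⟩ := exists_associated_pow_of_mul_eq_pow hu1 hFG
  have hu2 : IsUnit (gcd G F₁) :=
    hcopFG.symm.isUnit_of_dvd' (gcd_dvd_left _ _) (gcd_dvd_right _ _)
  obtain ⟨T, hT⟩ := exists_associated_pow_of_mul_eq_pow hu2 (by rw [mul_comm]; exact hFG)
  obtain ⟨u, hu⟩ := hS
  obtain ⟨v, hv⟩ := hT
  obtain ⟨δ, hδ0, hδ⟩ := units_eq_C u.isUnit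
  obtain ⟨δ'', hδ''0, hδ''⟩ := units_eq_C v.isUnit
  have hF₁e : F₁ = C δ * S ^ 4 := by rw [← hu, hδ]; ring
  have hGe : G = C δ'' * T ^ 4 := by rw [← hv, hδ'']; ring
  have hS0 : S ≠ 0 := by
    intro h; rw [h] at hF₁e; simp at hF₁e; exact hF₁ hF₁e
  have hT0 : T ≠ 0 := by
    intro h; rw [h] at hGe; simp at hGe; exact hG0 hGe
  have hcopST : IsCoprime S T := by
    rw [hF₁e, hGe] at hcopFG
    have h1 : IsCoprime (S ^ 4) (T ^ 4) :=
      (hcopFG.of_mul_left_right).of_mul_right_right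
    exact (IsCoprime.pow_left_iff (by norm_num)).mp
      ((IsCoprime.pow_right_iff (by norm_num)).mp h1)
  -- B^4 = (C δ * C δ'') * (S*T)^4
  have hB4 : B ^ 4 = C (δ * δ'') * (S * T) ^ 4 := by
    rw [← hFG, hF₁e, hGe, map_mul]; ring
  obtain ⟨e, he⟩ := IsAlgClosed.exists_pow_nat_eq (k := ℂ) (δ * δ'') (n := 4) (by norm_num)
  have he0 : e ≠ 0 := by
    intro h; rw [h] at he
    simp only [ne_eq, zero_pow, OfNat.ofNat_ne_zero, not_false_eq_true] at he
    exact (mul_ne_zero hδ0 hδ''0) he.symm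
  have hsq : (B ^ 2 - C (e^2) * S^2 * T^2) * (B ^ 2 + C (e^2) * S^2 * T^2) = 0 := by
    have : C (δ * δ'') = C (e ^ 4) := by rw [he]
    rw [this] at hB4
    have h4 : (4 : ℕ) = 2 * 2 := by norm_num
    calc (B ^ 2 - C (e^2) * S^2 * T^2) * (B ^ 2 + C (e^2) * S^2 * T^2)
        = B ^ 4 - C (e ^ 4) * (S * T) ^ 4 := by push_cast [map_pow]; ring
    _ = 0 := by rw [hB4]; ring
  rcases mul_eq_zero.mp hsq with h | h
  · exact ⟨S, T, δ, δ'', e^2, hδ0, hδ''0, pow_ne_zero 2 he0, hS0, hT0, hcopST, hF₁e,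
      by rw [hG, hGe]; ring, by linear_combination h⟩
  · exact ⟨S, T, δ, δ'', -(e^2), hδ0, hδ''0, neg_ne_zero.mpr (pow_ne_zero 2 he0), hS0, hT0, hcopST, hF₁e,
      by rw [hG, hGe]; ring, by rw [map_neg]; linear_combination h⟩

lemma step (P A B : ℂ[X]) (α : ℂ) (N : ℂ[X]) (hα : α ≠ 0) (hN : N.natDegree = 1)
    (hB : B ≠ 0) (hcop : IsCoprime A B)
    (heq : P ^ 2 = C α * A ^ 4 + 4 * A ^ 2 * B ^ 2 + N * B ^ 4) :
    ∃ (S T : ℂ[X]) (α' : ℂ) (N' : ℂ[X]), α' ≠ 0 ∧ N'.natDegree = 1 ∧ T ≠ 0 ∧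
      IsCoprime S T ∧ A ^ 2 = C α' * S ^ 4 + 4 * S ^ 2 * T ^ 2 + N' * T ^ 4 ∧
      S.natDegree + T.natDegree = B.natDegree := by
  obtain ⟨γ, hγ⟩ := IsAlgClosed.exists_pow_nat_eq (k := ℂ) α (n := 2) (by norm_num)
  have hγ0 : γ ≠ 0 := by intro h; rw [h] at hγ; simp at hγ; exact hα hγ.symm
  have hug : C α = C γ * C γ := by rw [← map_mul]; congr 1; rw [← hγ]; ring
  set M : ℂ[X] := C α * A ^ 2 + 2 * B ^ 2 with hM
  set L₁ : ℂ[X] := (-(C α)) * N + 4 with hL₁def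
  set F₁ : ℂ[X] := M - C γ * P with hF₁def
  set F₂ : ℂ[X] := M + C γ * P with hF₂def
  have hprod : F₁ * F₂ = L₁ * B ^ 4 := by
    rw [hF₁def, hF₂def, hM, hL₁def]
    linear_combination (-(C α)) * heq + P ^ 2 * hug
  have hL₁deg : L₁.natDegree = 1 := by
    rw [hL₁def, show (4:ℂ[X]) = C 4 from (map_ofNat C 4).symm, natDegree_add_C, ← map_neg,
      natDegree_C_mul (neg_ne_zero.mpr hα), hN]
  have hL₁0 : L₁ ≠ 0 := fun h => by simp [h] at hL₁deg
  have hB4 : B ^ 4 ≠ 0 := pow_ne_zero _ hB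
  have hF₁0 : F₁ ≠ 0 := by
    intro h; rw [h, zero_mul] at hprod; exact (mul_ne_zero hL₁0 hB4) hprod.symm
  have hF₂0 : F₂ ≠ 0 := by
    intro h; rw [h, mul_zero] at hprod; exact (mul_ne_zero hL₁0 hB4) hprod.symm
  -- coprimality of F₁ F₂
  have hcopF : IsCoprime F₁ F₂ := by
    classical
    rw [← EuclideanDomain.gcd_isUnit_iff]
    by_contra hgu
    have hg0 : EuclideanDomain.gcd F₁ F₂ ≠ 0 := by
      intro h
      exact hF₁0 (EuclideanDomain.gcd_eq_zero_iff.mp h).1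
    obtain ⟨π, hirr, hdg⟩ := WfDvdMonoid.exists_irreducible_factor hgu hg0
    have hπp : Prime π := hirr.prime
    have hπ1 : π ∣ F₁ := hdg.trans (EuclideanDomain.gcd_dvd_left _ _)
    have hπ2 : π ∣ F₂ := hdg.trans (EuclideanDomain.gcd_dvd_right _ _)
    have h2u : IsUnit (2 : ℂ[X]) := by
      rw [show (2 : ℂ[X]) = C 2 from (map_ofNat C 2).symm]
      exact isUnit_C.mpr (by norm_num)
    have hπM : π ∣ M := by
      have h : π ∣ 2 * M := by
        have : F₁ + F₂ = 2 * M := by rw [hF₁def, hF₂def]; ring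
        rw [← this]; exact dvd_add hπ1 hπ2
      rcases hπp.2.2 _ _ h with h' | h'
      · exact absurd (isUnit_of_dvd_unit h' h2u) hπp.not_unit
      · exact h'
    have hπP : π ∣ P := by
      have h : π ∣ (2 * C γ) * P := by
        have : F₂ - F₁ = (2 * C γ) * P := by rw [hF₁def, hF₂def]; ring
        rw [← this]; exact dvd_sub hπ2 hπ1
      rcases hπp.2.2 _ _ h with h' | h'
      · exact absurd (isUnit_of_dvd_unit h' (h2u.mul (isUnit_C.mpr (isUnit_iff_ne_zero.mpr hγ0)))) hπp.not_unit
      · exact h'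
    have hπB : ¬ π ∣ B := by
      intro hdB
      have hπA2 : π ∣ C α * A ^ 2 := by
        have : C α * A ^ 2 = M - 2 * B ^ 2 := by rw [hM]; ring
        rw [this]
        exact dvd_sub hπM (Dvd.dvd.mul_left (hdB.trans (dvd_pow_self B (by norm_num))) 2)
      have hπA : π ∣ A := by
        rcases hπp.2.2 _ _ hπA2 with h' | h'
        · exact absurd (isUnit_of_dvd_unit h' (isUnit_C.mpr (isUnit_iff_ne_zero.mpr hα))) hπp.not_unit
        · exact hπp.dvd_of_dvd_pow h'
      exact hπp.not_unit (hcop.isUnit_of_dvd' hπA hdB)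
    -- π^2 ∣ L₁ * B^4, π ∤ B^4 ⇒ π^2 ∣ L₁, degree contradiction
    have hπ2L : π ^ 2 ∣ L₁ := by
      apply hπp.pow_dvd_of_dvd_mul_right 2 (fun h => hπB (hπp.dvd_of_dvd_pow h))
      rw [← hprod, sq]
      exact mul_dvd_mul hπ1 hπ2
    have hd := natDegree_le_of_dvd hπ2L hL₁0
    rw [natDegree_pow, hL₁deg] at hd
    have := hirr.natDegree_pos
    omega
  -- L₁ is prime, divides F₁ * F₂
  have hL₁p : Prime L₁ := by
    apply (irreducible_of_degree_eq_one ?_).prime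
    rw [degree_eq_natDegree hL₁0, hL₁deg]
    rfl
  have hsum : F₁ + F₂ = 2 * M := by rw [hF₁def, hF₂def]; ring
  have key : ∃ (S T : ℂ[X]) (δ δ' θ : ℂ), δ ≠ 0 ∧ δ' ≠ 0 ∧ θ ≠ 0 ∧ S ≠ 0 ∧ T ≠ 0 ∧
      IsCoprime S T ∧ C δ * S ^ 4 + C δ' * L₁ * T ^ 4 = 2 * M ∧
      B ^ 2 = C θ * S ^ 2 * T ^ 2 := by
    rcases hL₁p.2.2 _ _ (Dvd.intro _ hprod.symm) with hdvd | hdvd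
    · obtain ⟨S, T, δ, δ', θ, h1, h2, h3, h4, h5, h6, h7, h8, h9⟩ :=
        extract F₂ F₁ L₁ B hB hF₂0 hcopF.symm (by rw [mul_comm]; exact hprod) hL₁0 hdvd
      exact ⟨S, T, δ, δ', θ, h1, h2, h3, h4, h5, h6, by linear_combination hsum - h7 - h8, h9⟩
    · obtain ⟨S, T, δ, δ', θ, h1, h2, h3, h4, h5, h6, h7, h8, h9⟩ :=
        extract F₁ F₂ L₁ B hB hF₁0 hcopF hprod hL₁0 hdvd
      exact ⟨S, T, δ, δ', θ, h1, h2, h3, h4, h5, h6, by linear_combination hsum - h7 - h8, h9⟩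
  obtain ⟨S, T, δ, δ', θ, hδ0, hδ'0, hθ0, hS0, hT0, hcopST, hsum2, hB2⟩ := key
  rw [hM] at hsum2
  obtain ⟨c, hc⟩ := IsAlgClosed.exists_pow_nat_eq (k := ℂ) (-θ/(2*α)) (n := 2) (by norm_num)
  have hc0 : c ≠ 0 := by
    intro h; rw [h] at hc
    simp only [ne_eq, zero_pow, OfNat.ofNat_ne_zero, not_false_eq_true] at hc
    field_simp at hc
    exact hθ0 (by linear_combination hc)
  set α' : ℂ := 2*α*δ/θ^2 with hα'def
  have hα'0 : α' ≠ 0 := by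
    rw [hα'def]
    exact div_ne_zero (mul_ne_zero (mul_ne_zero two_ne_zero hα) hδ0) (pow_ne_zero 2 hθ0)
  set N' : ℂ[X] := C (δ'/(2*α)) * L₁ with hN'def
  have hδ'2α : δ'/(2*α) ≠ 0 := div_ne_zero hδ'0 (mul_ne_zero two_ne_zero hα)
  have hN'deg : N'.natDegree = 1 := by
    rw [hN'def, natDegree_C_mul hδ'2α, hL₁deg]
  have hC0 : C (2*α) = 2 * C α := by
    rw [map_mul, map_ofNat]
  have hC1 : C (2*α) * (C α' * (C c)^4) = C δ := by
    rw [← map_pow, ← map_mul, ← map_mul]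
    congr 1
    have hc4 : c^4 = θ^2/(4*α^2) := by
      have : (c^2)^2 = (-θ/(2*α))^2 := by rw [hc]
      rw [← pow_mul] at this
      rw [show (4:ℕ) = 2*2 by norm_num, this]
      field_simp; ring
    rw [hα'def, hc4]
    field_simp; ring
  have hC2 : C (2*α) * (C c)^2 = - C θ := by
    rw [← map_pow, ← map_mul, ← map_neg]
    congr 1
    rw [hc]
    field_simp
  have hC3 : C (2*α) * C (δ'/(2*α)) = C δ' := by
    rw [← map_mul]
    congr 1
    field_simp
  have hC2α0 : (C (2*α) : ℂ[X]) ≠ 0 := by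
    simpa using mul_ne_zero (two_ne_zero (α := ℂ)) hα
  refine ⟨C c * S, T, α', N', hα'0, hN'deg, hT0, ?_, ?_, ?_⟩
  · exact (isCoprime_mul_unit_left_left (isUnit_C.mpr (isUnit_iff_ne_zero.mpr hc0)) S T).mpr hcopST
  · apply mul_left_cancel₀ hC2α0
    rw [hN'def]
    linear_combination (-1 : ℂ[X]) * hsum2 + (-4 : ℂ[X]) * hB2 + A^2 * hC0 + (-(S^4)) * hC1
      + (-(4*S^2*T^2)) * hC2 + (-(L₁*T^4)) * hC3
  · have hdeg := congrArg natDegree hB2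
    rw [natDegree_pow, natDegree_mul (mul_ne_zero (fun h => hθ0 (by simpa using h)) (pow_ne_zero 2 hS0)) (pow_ne_zero 2 hT0),
      natDegree_C_mul hθ0, natDegree_pow, natDegree_pow] at hdeg
    have : natDegree (C c * S) = natDegree S := natDegree_C_mul hc0
    omega

lemma deg_contra (P A B N : ℂ[X]) (α : ℂ) (hN : N.natDegree = 1) (hB : B ≠ 0)
    (hab : A.natDegree ≤ B.natDegree)
    (heq : P ^ 2 = C α * A ^ 4 + 4 * A ^ 2 * B ^ 2 + N * B ^ 4) : False := by
  have hN0 : N ≠ 0 := fun h => by simp [h] at hN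
  have hRd : (N * B ^ 4).natDegree = 1 + 4 * B.natDegree := by
    rw [natDegree_mul hN0 (pow_ne_zero _ hB), natDegree_pow, hN]
  have h1 : (C α * A ^ 4).natDegree ≤ 4 * B.natDegree := by
    refine (natDegree_C_mul_le _ _).trans ?_
    rw [natDegree_pow]; omega
  have h2 : (4 * A ^ 2 * B ^ 2).natDegree ≤ 4 * B.natDegree := by
    refine natDegree_mul_le.trans ?_
    have : (4 * A ^ 2 : ℂ[X]).natDegree ≤ 2 * B.natDegree := by
      have : ((4:ℂ[X]) * A ^ 2).natDegree ≤ (A^2).natDegree := by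
        have h4 : (4:ℂ[X]) = C (4:ℂ) := (map_ofNat C 4).symm
        rw [h4]; exact natDegree_C_mul_le _ _
      rw [natDegree_pow] at this; omega
    rw [natDegree_pow]; omega
  have hlt : (C α * A ^ 4 + 4 * A ^ 2 * B ^ 2).natDegree < (N * B ^ 4).natDegree := by
    rw [hRd]
    exact lt_of_le_of_lt (natDegree_add_le_of_le h1 h2) (by omega)
  have hRHS : (C α * A ^ 4 + 4 * A ^ 2 * B ^ 2 + N * B ^ 4).natDegree = 1 + 4 * B.natDegree := by
    rw [natDegree_add_eq_right_of_natDegree_lt hlt, hRd]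
  have hP : P ≠ 0 := by
    intro h
    rw [h] at heq
    rw [← heq] at hRHS
    simp at hRHS
    omega
  have : (P ^ 2).natDegree = 1 + 4 * B.natDegree := by rw [heq, hRHS]
  rw [natDegree_pow] at this
  omega

lemma descent (n : ℕ) : ∀ (P A B : ℂ[X]) (α : ℂ) (N : ℂ[X]), α ≠ 0 → N.natDegree = 1 → B ≠ 0 →
    IsCoprime A B → P ^ 2 = C α * A ^ 4 + 4 * A ^ 2 * B ^ 2 + N * B ^ 4 →
    B.natDegree ≤ n → False := by
  induction n with
  | zero =>
    intro P A B α N hα hN hB hcop heq hble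
    by_cases h : A.natDegree ≤ B.natDegree
    · exact deg_contra P A B N α hN hB h heq
    · obtain ⟨S, T, α', N', hα', hN', hT0, hcopST, heq', hst⟩ :=
        step P A B α N hα hN hB hcop heq
      exact deg_contra A S T N' α' hN' hT0 (by omega) heq'
  | succ n ih =>
    intro P A B α N hα hN hB hcop heq hble
    by_cases h : A.natDegree ≤ B.natDegree
    · exact deg_contra P A B N α hN hB h heq
    · obtain ⟨S, T, α', N', hα', hN', hT0, hcopST, heq', hst⟩ :=
        step P A B α N hα hN hB hcop heq
      by_cases h2 : S.natDegree ≤ T.natDegree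
      · exact deg_contra A S T N' α' hN' hT0 h2 heq'
      · exact ih A S T α' N' hα' hN' hT0 hcopST heq' (by omega)

lemma no_sol (P A B : ℂ[X]) (α : ℂ) (N : ℂ[X]) (hα : α ≠ 0) (hN : N.natDegree = 1)
    (hB : B ≠ 0) (hcop : IsCoprime A B)
    (heq : P ^ 2 = C α * A ^ 4 + 4 * A ^ 2 * B ^ 2 + N * B ^ 4) : False :=
  descent B.natDegree P A B α N hα hN hB hcop heq le_rfl

lemma no_ratfunc_sol : ¬ ∃ w y : RatFunc ℂ, y ^ 2 = (w ^ 2 - 2) ^ 2 - 4 * RatFunc.X := by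
  rintro ⟨w, y, hwy⟩
  set Pn := w.num with hPdef
  set Qd := w.denom with hQdef
  have hQ0 : Qd ≠ 0 := w.denom_ne_zero
  have hcop : IsCoprime Pn Qd := w.isCoprime_num_denom
  set φ := algebraMap ℂ[X] (RatFunc ℂ) with hφdef
  have hφQ : φ Qd ≠ 0 := by
    rw [hφdef]; exact RatFunc.algebraMap_ne_zero hQ0
  have hw : φ Pn = w * φ Qd := by
    rw [hφdef]
    exact (div_eq_iff (by rw [hφdef] at hφQ; exact hφQ)).mp (RatFunc.num_div_denom w)
  have hPn2 : (φ Pn) ^ 2 = w ^ 2 * (φ Qd) ^ 2 := by rw [hw]; ring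
  set d : ℂ[X] := (Pn^2 - 2*Qd^2)^2 - 4*Polynomial.X*Qd^4 with hddef
  set r : RatFunc ℂ := y * φ (Qd^2) with hrdef
  have hX : (RatFunc.X : RatFunc ℂ) = φ Polynomial.X := (RatFunc.algebraMap_X).symm
  have hr2 : r ^ 2 = φ d := by
    rw [hrdef, hddef]
    simp only [map_sub, map_mul, map_pow, map_ofNat, ← hX]
    linear_combination ((φ Qd)^4) * hwy + (-((φ Pn)^2 + w^2*(φ Qd)^2 - 4*(φ Qd)^2)) * hPn2
  have hint : IsIntegral ℂ[X] r := by
    refine ⟨Polynomial.X ^ 2 - Polynomial.C d, monic_X_pow_sub_C d (by norm_num), ?_⟩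
    simp only [eval₂_sub, eval₂_pow, eval₂_X, eval₂_C]
    rw [hr2]; ring
  obtain ⟨R, hR⟩ := IsIntegrallyClosed.isIntegral_iff.mp hint
  have hR2 : R ^ 2 = d := by
    apply IsFractionRing.injective ℂ[X] (RatFunc ℂ)
    rw [map_pow]
    show (φ R) ^ 2 = φ d
    rw [hR, hr2]
  have hI2 : (C Complex.I) ^ 2 = (-1 : ℂ[X]) := by
    rw [← map_pow, Complex.I_sq, map_neg, map_one]
  have hN : ((4 : ℂ[X]) - 4 * Polynomial.X).natDegree = 1 := by
    have h4 : ((4:ℂ[X]) - 4 * Polynomial.X) = C (-4) * Polynomial.X + C 4 := by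
      rw [map_neg, map_ofNat]; ring
    rw [h4, natDegree_add_C, natDegree_C_mul (by norm_num : (-4:ℂ) ≠ 0), natDegree_X]
  apply no_sol R Pn (C Complex.I * Qd) 1 (4 - 4*Polynomial.X) one_ne_zero hN
    (mul_ne_zero (C_ne_zero.mpr Complex.I_ne_zero) hQ0)
    ((isCoprime_mul_unit_left_right (isUnit_C.mpr (isUnit_iff_ne_zero.mpr Complex.I_ne_zero)) _ _).mpr hcop)
  rw [map_one, hR2, hddef]
  linear_combination (4*Pn^2*Qd^2 - (4 - 4*Polynomial.X)*Qd^4*((C Complex.I)^2 - 1) - 8*Pn^2*Qd^2) * hI2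

/-- **There are no multiplier sections of period 2.**
Over `K = ℂ(λ)`, there is no triple `(a, b, z₁) ∈ K³` such that, with
`z₂ := z₁³ + a·z₁ + b`, one has `z₂ ≠ z₁`, `z₂³ + a·z₂ + b = z₁`, and
`(3z₁² + a)(3z₂² + a) = λ`. -/
theorem no_period_two_multiplier_sections :
    ¬ ∃ a b z₁ : RatFunc ℂ,
        z₁ ^ 3 + a * z₁ + b ≠ z₁ ∧
        (z₁ ^ 3 + a * z₁ + b) ^ 3 + a * (z₁ ^ 3 + a * z₁ + b) + b = z₁ ∧
        (3 * z₁ ^ 2 + a) * (3 * (z₁ ^ 3 + a * z₁ + b) ^ 2 + a) = RatFunc.X := by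
  rintro ⟨a, b, z₁, h1, h2, h3⟩
  set z₂ : RatFunc ℂ := z₁ ^ 3 + a * z₁ + b with hz₂
  have hfac : (z₁ - z₂) * (z₁^2 + z₁*z₂ + z₂^2 + a + 1) = 0 := by
    linear_combination (-1 : RatFunc ℂ) * hz₂ - h2
  have hne : z₁ - z₂ ≠ 0 := sub_ne_zero.mpr (Ne.symm h1)
  have hE : z₁^2 + z₁*z₂ + z₂^2 + a + 1 = 0 := by
    rcases mul_eq_zero.mp hfac with h | h
    · exact absurd h hne
    · exact h
  exact no_ratfunc_sol ⟨z₁ - z₂, 3*(z₁^2 - z₂^2), by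
    linear_combination (-4 : RatFunc ℂ) * h3 + (8*z₁^2 - 4*z₁*z₂ + 8*z₂^2 + 4*a - 4) * hE⟩
end

section
/- Let ℂ(w) be the field of rational functions over ℂ in the variable w. The set of triples (a, b, z₁) ∈ ℂ(w)³ such that, with z₂ := z₁³ + a·z₁ + b, one has z₂ ≠ z₁, z₂³ + a·z₂ + b = z₁, and (3z₁² + a)(3z₂² + a) = w¹², is infinite. (There are infinitely many 12th-root multiplier sections of period 2.) -/
noncomputable section

namespace Twelfth

open Polynomial

abbrev F : Type := RatFunc ℂ

instance : CharZero F :=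
  charZero_of_injective_algebraMap (algebraMap ℂ (RatFunc ℂ)).injective

def w : F := RatFunc.X
def om : F := w⁻¹
lemma w_ne : w ≠ 0 := RatFunc.X_ne_zero
lemma om_ne : om ≠ 0 := inv_ne_zero w_ne

local notation "M" => algebraMap (Polynomial ℂ) F

/-! ### Regular-at-infinity machinery -/

def Reg (f : F) : Prop :=
  ∃ p q : Polynomial ℂ, q ≠ 0 ∧ p.natDegree ≤ q.natDegree ∧ f = M p / M q

lemma reg_C (c : ℂ) : Reg (RatFunc.C c) :=
  ⟨Polynomial.C c, 1, one_ne_zero, by simp,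
    by rw [map_one, div_one, RatFunc.algebraMap_C]⟩

lemma reg_one : Reg 1 := by simpa using reg_C 1

lemma reg_ofNat (n : ℕ) [n.AtLeastTwo] : Reg (OfNat.ofNat n : F) := by
  rw [← map_ofNat (RatFunc.C) n]; exact reg_C _

lemma reg_om : Reg om :=
  ⟨1, Polynomial.X, Polynomial.X_ne_zero, by simp,
    by rw [map_one, RatFunc.algebraMap_X, one_div]; rfl⟩

lemma reg_add {f g : F} (hf : Reg f) (hg : Reg g) : Reg (f + g) := by
  obtain ⟨p₁, q₁, hq₁, hd₁, rfl⟩ := hf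
  obtain ⟨p₂, q₂, hq₂, hd₂, rfl⟩ := hg
  refine ⟨p₁ * q₂ + p₂ * q₁, q₁ * q₂, mul_ne_zero hq₁ hq₂, ?_, ?_⟩
  · rw [Polynomial.natDegree_mul hq₁ hq₂]
    refine (Polynomial.natDegree_add_le _ _).trans (max_le ?_ ?_)
    · exact Polynomial.natDegree_mul_le.trans (by omega)
    · exact Polynomial.natDegree_mul_le.trans (by omega)
  · rw [div_add_div _ _ (RatFunc.algebraMap_ne_zero hq₁) (RatFunc.algebraMap_ne_zero hq₂),
      ← map_mul, ← map_mul, ← map_mul, ← map_add]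
    ring_nf

lemma reg_mul {f g : F} (hf : Reg f) (hg : Reg g) : Reg (f * g) := by
  obtain ⟨p₁, q₁, hq₁, hd₁, rfl⟩ := hf
  obtain ⟨p₂, q₂, hq₂, hd₂, rfl⟩ := hg
  refine ⟨p₁ * p₂, q₁ * q₂, mul_ne_zero hq₁ hq₂, ?_, ?_⟩
  · exact Polynomial.natDegree_mul_le.trans
      ((add_le_add hd₁ hd₂).trans (Polynomial.natDegree_mul hq₁ hq₂).symm.le)
  · rw [div_mul_div_comm, ← map_mul, ← map_mul]

lemma reg_neg {f : F} (hf : Reg f) : Reg (-f) := by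
  have := reg_mul (reg_C (-1)) hf
  simpa using this

lemma reg_sub {f g : F} (hf : Reg f) (hg : Reg g) : Reg (f - g) := by
  rw [sub_eq_add_neg]; exact reg_add hf (reg_neg hg)

lemma reg_pow_om (k : ℕ) : Reg (om ^ k) := by
  induction k with
  | zero => simpa using reg_one
  | succ n ih => rw [pow_succ]; exact reg_mul ih reg_om

lemma unit_spec {c : ℂ} (hc : c ≠ 0) {g : F} (hg : Reg g) :
    (RatFunc.C c + om * g ≠ 0) ∧ Reg (RatFunc.C c + om * g)⁻¹ := by
  obtain ⟨p, q, hq, hd, rfl⟩ := hg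
  set N : Polynomial ℂ := Polynomial.C c * (Polynomial.X * q) + p with hN
  have hcoeff : N.coeff (q.natDegree + 1) = c * q.leadingCoeff := by
    rw [hN, Polynomial.coeff_add, Polynomial.coeff_C_mul, Polynomial.coeff_X_mul,
      Polynomial.coeff_eq_zero_of_natDegree_lt (lt_of_le_of_lt hd (Nat.lt_succ_self _)),
      add_zero]
    rfl
  have hlc : c * q.leadingCoeff ≠ 0 :=
    mul_ne_zero hc (Polynomial.leadingCoeff_ne_zero.mpr hq)
  have hNne : N ≠ 0 := by
    intro h0
    rw [h0, Polynomial.coeff_zero] at hcoeff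
    exact hlc hcoeff.symm
  have hXq : (Polynomial.X * q : Polynomial ℂ) ≠ 0 :=
    mul_ne_zero Polynomial.X_ne_zero hq
  have hEq : RatFunc.C c + om * (M p / M q) = M N / M (Polynomial.X * q) := by
    rw [hN, map_add, map_mul, map_mul, RatFunc.algebraMap_C, RatFunc.algebraMap_X, om, w]
    have h1 : (RatFunc.X : F) ≠ 0 := RatFunc.X_ne_zero
    have h2 : M q ≠ 0 := RatFunc.algebraMap_ne_zero hq
    field_simp
  constructor
  · rw [hEq]
    exact div_ne_zero (RatFunc.algebraMap_ne_zero hNne) (RatFunc.algebraMap_ne_zero hXq)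
  · refine ⟨Polynomial.X * q, N, hNne, ?_, ?_⟩
    · rw [Polynomial.natDegree_mul Polynomial.X_ne_zero hq, Polynomial.natDegree_X]
      exact Polynomial.le_natDegree_of_ne_zero (by rw [Nat.add_comm, hcoeff]; exact hlc)
    · rw [hEq, inv_div]

lemma const_sep {e : ℂ} {g : F} (hg : Reg g) (h : RatFunc.C e = om * g) : e = 0 := by
  obtain ⟨p, q, hq, hd, rfl⟩ := hg
  by_contra he
  have key : M (Polynomial.C e * (Polynomial.X * q)) = M p := by
    rw [map_mul, map_mul, RatFunc.algebraMap_C, RatFunc.algebraMap_X]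
    rw [om, w] at h
    have h1 : (RatFunc.X : F) ≠ 0 := RatFunc.X_ne_zero
    have h2 : M q ≠ 0 := RatFunc.algebraMap_ne_zero hq
    field_simp at h
    linear_combination h
  have hkey := RatFunc.algebraMap_injective (K := ℂ) key
  have hdeg : (Polynomial.C e * (Polynomial.X * q)).natDegree = q.natDegree + 1 := by
    rw [Polynomial.natDegree_C_mul he, Polynomial.natDegree_mul Polynomial.X_ne_zero hq,
      Polynomial.natDegree_X]
    omega
  rw [hkey] at hdeg
  omega

lemma unit_form_ne {c : ℂ} (hc : c ≠ 0) {g : F} (hg : Reg g) {f : F} (k : ℕ)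
    (hf : f = om ^ k * (RatFunc.C c + om * g)) : f ≠ 0 := by
  rw [hf]
  exact mul_ne_zero (pow_ne_zero _ om_ne) (unit_spec hc hg).1

/-! ### Vieta chord addition -/

theorem chart_add {K : Type*} [Field K] (A2 A4 T1 S1 T2 S2 mu nu DD P3 T3 S3 : K)
    (h1 : S1 = T1 ^ 3 + A2 * T1 ^ 2 * S1 + A4 * T1 * S1 ^ 2)
    (h2 : S2 = T2 ^ 3 + A2 * T2 ^ 2 * S2 + A4 * T2 * S2 ^ 2)
    (hT : T2 - T1 ≠ 0)
    (hmu : mu * (T2 - T1) = S2 - S1)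
    (hnu : nu = S1 - mu * T1)
    (hDD : DD = 1 + A2 * mu + A4 * mu ^ 2)
    (hDD0 : DD ≠ 0)
    (hP3 : P3 = -DD * (T1 + T2) - (A2 * nu + 2 * A4 * mu * nu))
    (hT3 : T3 * DD = P3)
    (hS3 : S3 = mu * T3 + nu) :
    -S3 = (-T3) ^ 3 + A2 * (-T3) ^ 2 * (-S3) + A4 * (-T3) * (-S3) ^ 2 := by
  have L1 : S1 = mu * T1 + nu := by rw [hnu]; ring
  have L2 : S2 = mu * T2 + nu := by rw [hnu]; linear_combination -hmu
  set p : K := mu - A4 * nu ^ 2 + DD * T1 * T2 + (T1 + T2) * P3 with hp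
  set q : K := nu - T1 * T2 * P3 with hq
  have K1 : p * T1 + q = 0 := by
    have e1 : p * T1 + q =
        (mu * T1 + nu) - T1 ^ 3 - A2 * T1 ^ 2 * (mu * T1 + nu)
          - A4 * T1 * (mu * T1 + nu) ^ 2 := by
      rw [hp, hq, hP3, hDD]; ring
    rw [← L1] at e1
    rw [e1]; linear_combination h1
  have K2 : p * T2 + q = 0 := by
    have e2 : p * T2 + q =
        (mu * T2 + nu) - T2 ^ 3 - A2 * T2 ^ 2 * (mu * T2 + nu)
          - A4 * T2 * (mu * T2 + nu) ^ 2 := by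
      rw [hp, hq, hP3, hDD]; ring
    rw [← L2] at e2
    rw [e2]; linear_combination h2
  have hpz : p = 0 := by
    have hmul : p * (T2 - T1) = 0 := by linear_combination K2 - K1
    exact (mul_eq_zero.mp hmul).resolve_right hT
  have hqz : q = 0 := by linear_combination K1 - T1 * hpz
  have hZ : DD * T3 = P3 := by rw [mul_comm]; exact hT3
  have main : DD ^ 3 * (S3 - T3 ^ 3 - A2 * T3 ^ 2 * S3 - A4 * T3 * S3 ^ 2)
      = DD ^ 2 * mu * (DD * T3) + DD ^ 3 * nu - (DD * T3) ^ 3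
        - A2 * (DD * T3) ^ 2 * (mu * (DD * T3) + DD * nu)
        - A4 * (DD * T3) * (mu * (DD * T3) + DD * nu) ^ 2 := by
    rw [hS3]; ring
  rw [hZ] at main
  have step2 : DD ^ 2 * mu * P3 + DD ^ 3 * nu - P3 ^ 3
        - A2 * P3 ^ 2 * (mu * P3 + DD * nu)
        - A4 * P3 * (mu * P3 + DD * nu) ^ 2
      = DD ^ 2 * p * P3 + DD ^ 3 * q := by
    rw [hp, hq, hP3, hDD]; ring
  rw [step2] at main
  rw [hpz, hqz, mul_zero, zero_mul, mul_zero, add_zero] at main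
  have hb : S3 - T3 ^ 3 - A2 * T3 ^ 2 * S3 - A4 * T3 * S3 ^ 2 = 0 := by
    rcases mul_eq_zero.mp main with h | h
    · exact absurd h (pow_ne_zero _ hDD0)
    · exact h
  linear_combination -hb

/-! ### The specific curve and points -/

def dd : ℂ := Complex.I * (Real.sqrt 2 : ℂ)

lemma dd_sq : dd ^ 2 = -2 := by
  have h2 : ((Real.sqrt 2 : ℝ) : ℂ) ^ 2 = 2 := by
    norm_cast
    rw [Real.sq_sqrt]; norm_num
  rw [dd, mul_pow, Complex.I_sq, h2]; ring

lemma dd_ne : dd ≠ 0 := by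
  intro h
  have h2 := dd_sq
  rw [h] at h2
  norm_num at h2

def DC : F := RatFunc.C dd

lemma DC_sq : DC ^ 2 = -2 := by
  rw [DC, ← map_pow, dd_sq, map_neg, map_ofNat]

def a2 : F := 2 * om ^ 8
def a4 : F := om ^ 4

def OnC (T S : F) : Prop := S = T ^ 3 + a2 * T ^ 2 * S + a4 * T * S ^ 2

lemma onC_lift (T' S' : F)
    (h : S' = -2 * (T' ^ 3 + a2 * T' ^ 2 * S' + a4 * T' * S' ^ 2)) :
    OnC (DC * T') (DC * S') := by
  unfold OnC
  linear_combination DC * h - DC * (T' ^ 3 + a2 * T' ^ 2 * S' + a4 * T' * S' ^ 2) * DC_sq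

def TA : F := DC * om ^ 2
def SA : F := DC * (-2 * om ^ 6)

lemma onC_A : OnC TA SA := onC_lift _ _ (by unfold a2 a4; ring)

def denB : F := 1 + 12 * om ^ 12 - 80 * om ^ 24 + 64 * om ^ 36

lemma denB_form : denB = RatFunc.C 1 +
    om * (12 * om ^ 11 - 80 * om ^ 23 + 64 * om ^ 35) := by
  rw [map_one]; unfold denB; ring

lemma reg_denB_aux : Reg (12 * om ^ 11 - 80 * om ^ 23 + 64 * om ^ 35) :=
  reg_add (reg_sub (reg_mul (reg_ofNat 12) (reg_pow_om 11))
    (reg_mul (reg_ofNat 80) (reg_pow_om 23))) (reg_mul (reg_ofNat 64) (reg_pow_om 35))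

lemma denB_ne : denB ≠ 0 := by
  rw [denB_form]
  exact (unit_spec one_ne_zero reg_denB_aux).1

lemma reg_denB_inv : Reg denB⁻¹ := by
  rw [denB_form]
  exact (unit_spec one_ne_zero reg_denB_aux).2

def TB : F := DC * ((2 * om ^ 2 - 16 * om ^ 14 + 32 * om ^ 26) * denB⁻¹)
def SB : F := DC * (-16 * om ^ 6 * denB⁻¹)

lemma onC_B : OnC TB SB := by
  refine onC_lift _ _ ?_
  unfold a2 a4
  field_simp [denB_ne]
  unfold denB
  ring

/-! ### The addition step -/

def muF (T S : F) : F := (S - SA) / (T - TA)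
def nuF (T S : F) : F := SA - muF T S * TA
def DDF (T S : F) : F := 1 + a2 * muF T S + a4 * (muF T S) ^ 2
def P3F (T S : F) : F :=
  -(DDF T S) * (TA + T) - (a2 * nuF T S + 2 * a4 * muF T S * nuF T S)
def TnF (T S : F) : F := -(P3F T S / DDF T S)
def SnF (T S : F) : F := -(muF T S * (P3F T S / DDF T S) + nuF T S)

lemma C_split (x : ℂ) (c : ℂ) : RatFunc.C (x * dd) = RatFunc.C ((x - c) * dd) + RatFunc.C (c * dd) := by
  rw [← map_add]
  congr 1
  ring

lemma step_good {n : ℕ} {T S g h : F} (hC : OnC T S) (hg : Reg g)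
    (hTexp : T = om ^ 2 * (RatFunc.C (((n : ℂ) + 2) * dd) + om * g))
    (hh : Reg h) (hSexp : S = om ^ 6 * h) :
    OnC (TnF T S) (SnF T S) ∧
      (∃ g', Reg g' ∧ TnF T S = om ^ 2 * (RatFunc.C (((n : ℂ) + 3) * dd) + om * g')) ∧
      (∃ h', Reg h' ∧ SnF T S = om ^ 6 * h') := by
  have hn1 : ((n : ℂ) + 1) * dd ≠ 0 := by
    refine mul_ne_zero ?_ dd_ne
    intro h0
    have : (n : ℂ) + 1 ≠ 0 := Nat.cast_add_one_ne_zero n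
    exact this h0
  set U : F := RatFunc.C (((n : ℂ) + 1) * dd) + om * g with hU_def
  have hU := unit_spec hn1 hg
  rw [← hU_def] at hU
  have hCC : RatFunc.C (((n : ℂ) + 2) * dd) = RatFunc.C (((n : ℂ) + 1) * dd) + DC := by
    rw [DC, ← map_add]
    congr 1
    ring
  have hΔ : T - TA = om ^ 2 * U := by
    rw [hTexp, TA, hCC, hU_def]; ring
  have hΔne : T - TA ≠ 0 := by
    rw [hΔ]
    exact mul_ne_zero (pow_ne_zero _ om_ne) hU.1
  have hC2dd : RatFunc.C (2 * dd) = 2 * DC := by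
    rw [DC, map_mul, map_ofNat]
  have hSdiff : S - SA = om ^ 6 * (h + 2 * DC) := by
    rw [hSexp, SA]; ring
  set m1 : F := (h + 2 * DC) * U⁻¹ with hm1_def
  have hm1 : Reg m1 := reg_mul (reg_add hh (reg_mul (reg_ofNat 2) (reg_C dd))) hU.2
  have hUU : U⁻¹ * U = 1 := inv_mul_cancel₀ hU.1
  have hmu : muF T S = om ^ 4 * m1 := by
    rw [muF, hSdiff, hΔ, hm1_def,
      div_eq_iff (mul_ne_zero (pow_ne_zero 2 om_ne) hU.1)]
    linear_combination (-(om ^ 6 * (h + 2 * DC))) * hUU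
  set n1 : F := -(2 * DC) - DC * m1 with hn1_def
  have hn1reg : Reg n1 := reg_sub (reg_neg (reg_mul (reg_ofNat 2) (reg_C dd)))
    (reg_mul (reg_C dd) hm1)
  have hnu : nuF T S = om ^ 6 * n1 := by
    rw [nuF, hmu, SA, TA, hn1_def]; ring
  have hDD : DDF T S = RatFunc.C 1 + om * (om ^ 11 * (2 * m1 + m1 * m1)) := by
    rw [DDF, hmu, a2, a4, map_one]; ring
  have hDDreg : Reg (om ^ 11 * (2 * m1 + m1 * m1)) :=
    reg_mul (reg_pow_om 11) (reg_add (reg_mul (reg_ofNat 2) hm1) (reg_mul hm1 hm1))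
  have hDDu := unit_spec one_ne_zero hDDreg
  rw [← hDD] at hDDu
  set e1 : F := 2 * n1 + 2 * m1 * n1 with he1_def
  have he1 : Reg e1 := reg_add (reg_mul (reg_ofNat 2) hn1reg)
    (reg_mul (reg_mul (reg_ofNat 2) hm1) hn1reg)
  have hEEx : a2 * nuF T S + 2 * a4 * muF T S * nuF T S = om ^ 14 * e1 := by
    rw [hmu, hnu, a2, a4, he1_def]; ring
  have hDDinv : (DDF T S)⁻¹ * DDF T S = 1 := inv_mul_cancel₀ hDDu.1
  have hTn : TnF T S = (TA + T) + om ^ 14 * e1 * (DDF T S)⁻¹ := by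
    rw [TnF, P3F, hEEx, div_eq_mul_inv]
    linear_combination (TA + T) * hDDinv
  have hCC3 : RatFunc.C (((n : ℂ) + 3) * dd) = RatFunc.C (((n : ℂ) + 2) * dd) + DC := by
    rw [DC, ← map_add]
    congr 1
    ring
  set g' : F := g + om ^ 11 * (e1 * (DDF T S)⁻¹) with hg'_def
  have hg' : Reg g' := reg_add hg (reg_mul (reg_pow_om 11) (reg_mul he1 hDDu.2))
  have hTn' : TnF T S = om ^ 2 * (RatFunc.C (((n : ℂ) + 3) * dd) + om * g') := by
    rw [hTn, hg'_def, hCC3, TA, hTexp]; ring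
  set h' : F := m1 * (RatFunc.C (((n : ℂ) + 3) * dd) + om * g') - n1 with hh'_def
  have hh' : Reg h' := reg_sub (reg_mul hm1 (reg_add (reg_C _) (reg_mul reg_om hg'))) hn1reg
  have hSn : SnF T S = muF T S * TnF T S - nuF T S := by
    rw [SnF, TnF]; ring
  have hSn' : SnF T S = om ^ 6 * h' := by
    rw [hSn, hh'_def, hmu, hTn', hnu]; ring
  refine ⟨?_, ⟨g', hg', hTn'⟩, ⟨h', hh', hSn'⟩⟩
  · have h1 := onC_A
    unfold OnC at h1 hC ⊢
    unfold TnF SnF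
    have hmu' : muF T S * (T - TA) = S - SA := div_mul_cancel₀ _ hΔne
    have hT3 : (P3F T S / DDF T S) * DDF T S = P3F T S := div_mul_cancel₀ _ hDDu.1
    exact chart_add a2 a4 TA SA T S (muF T S) (nuF T S) (DDF T S) (P3F T S)
      (P3F T S / DDF T S) (muF T S * (P3F T S / DDF T S) + nuF T S)
      h1 hC hΔne hmu' rfl rfl hDDu.1 rfl hT3 rfl

/-! ### The sequence of points -/

def Q : ℕ → F × F
  | 0 => (TB, SB)
  | n + 1 => (TnF (Q n).1 (Q n).2, SnF (Q n).1 (Q n).2)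

def Good (n : ℕ) (P : F × F) : Prop :=
  OnC P.1 P.2 ∧
    (∃ g, Reg g ∧ P.1 = om ^ 2 * (RatFunc.C (((n : ℂ) + 2) * dd) + om * g)) ∧
    (∃ h, Reg h ∧ P.2 = om ^ 6 * h)

lemma good_base : Good 0 (Q 0) := by
  refine ⟨onC_B, ?_, ?_⟩
  · refine ⟨DC * (om ^ 11 * ((-40 + 192 * om ^ 12 - 128 * om ^ 24) * denB⁻¹)),
      reg_mul (reg_C dd) (reg_mul (reg_pow_om 11) (reg_mul
        (reg_sub (reg_add (reg_neg (reg_ofNat 40)) (reg_mul (reg_ofNat 192) (reg_pow_om 12)))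
          (reg_mul (reg_ofNat 128) (reg_pow_om 24))) reg_denB_inv)), ?_⟩
    · show TB = _
      have hcst : RatFunc.C ((((0 : ℕ) : ℂ) + 2) * dd) = 2 * DC := by
        rw [DC, ← map_ofNat (RatFunc.C) 2, ← map_mul]
        congr 1
        norm_num
      rw [TB, hcst]
      have hdi : denB⁻¹ * (1 + 12 * om ^ 12 - 80 * om ^ 24 + 64 * om ^ 36) = 1 := by
        rw [show (1 + 12 * om ^ 12 - 80 * om ^ 24 + 64 * om ^ 36 : F) = denB from rfl]
        exact inv_mul_cancel₀ denB_ne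
      linear_combination (2 * om ^ 2 * DC) * hdi
  · refine ⟨RatFunc.C (-16) * DC * denB⁻¹,
      reg_mul (reg_mul (reg_C _) (reg_C dd)) reg_denB_inv, ?_⟩
    show SB = _
    rw [SB, map_neg, map_ofNat]
    ring

lemma good_all (n : ℕ) : Good n (Q n) := by
  induction n with
  | zero => exact good_base
  | succ m ih =>
    obtain ⟨hC, ⟨g, hg, hTexp⟩, ⟨h, hh, hSexp⟩⟩ := ih
    obtain ⟨hC', ⟨g', hg', hT'⟩, ⟨h', hh', hS'⟩⟩ := step_good hC hg hTexp hh hSexp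
    refine ⟨hC', ⟨g', hg', ?_⟩, ⟨h', hh', hS'⟩⟩
    rw [show ((((m + 1 : ℕ)) : ℂ) + 2) * dd = ((m : ℂ) + 3) * dd from by push_cast; ring]
    exact hT'

lemma Q1_ne (n : ℕ) : (Q n).1 ≠ 0 := by
  obtain ⟨-, ⟨g, hg, hTexp⟩, -⟩ := good_all n
  have hne : ((n : ℂ) + 2) * dd ≠ 0 := by
    refine mul_ne_zero ?_ dd_ne
    have h1 : ((n + 2 : ℕ) : ℂ) ≠ 0 := Nat.cast_ne_zero.mpr (by omega)
    push_cast at h1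
    exact h1
  exact unit_form_ne hne hg 2 hTexp

lemma Q2_ne (n : ℕ) : (Q n).2 ≠ 0 := by
  intro h0
  have hC := (good_all n).1
  unfold OnC at hC
  rw [h0] at hC
  have h3 : (Q n).1 ^ 3 = 0 := by linear_combination -hC
  exact Q1_ne n ((pow_eq_zero_iff (three_ne_zero (α := ℕ))).mp h3)

/-! ### From a chart point to a solution triple -/

def xx (T S : F) : F := w ^ 8 * T / S
def uu (T : F) : F := w ^ 4 / T
def vv (T S : F) : F := w ^ 12 / xx T S - xx T S
def z1F (T S : F) : F := (vv T S / (3 * uu T) + uu T) / 2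
def z2F (T S : F) : F := z1F T S - uu T
def aF (T S : F) : F := -1 - ((z1F T S) ^ 2 + z1F T S * z2F T S + (z2F T S) ^ 2)
def bF (T S : F) : F := z2F T S - (z1F T S) ^ 3 - aF T S * z1F T S

def trip (n : ℕ) : F × F × F :=
  (aF (Q n).1 (Q n).2, bF (Q n).1 (Q n).2, z1F (Q n).1 (Q n).2)

lemma uu_ne {T : F} (hT : T ≠ 0) : uu T ≠ 0 := by
  rw [uu]
  exact div_ne_zero (pow_ne_zero _ w_ne) hT

lemma xx_ne {T S : F} (hT : T ≠ 0) (hS : S ≠ 0) : xx T S ≠ 0 := by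
  rw [xx]
  exact div_ne_zero (mul_ne_zero (pow_ne_zero _ w_ne) hT) hS

lemma hE_lemma (T S : F) : (z1F T S) ^ 3 + aF T S * z1F T S + bF T S = z2F T S := by
  rw [bF]; ring

lemma cond2_lemma (T S : F) :
    (z2F T S) ^ 3 + aF T S * z2F T S + bF T S = z1F T S := by
  rw [bF, aF, z2F]; ring

lemma hu2_lemma {T S : F} (hC : OnC T S) (hT : T ≠ 0) (hS : S ≠ 0) :
    (uu T) ^ 2 = xx T S + 2 + w ^ 12 / xx T S := by
  unfold OnC a2 a4 at hC
  have hom : om = w⁻¹ := rfl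
  rw [uu, xx]
  rw [hom] at hC
  field_simp [w_ne] at hC ⊢
  linear_combination hC

lemma mult_lemma {T S : F} (hC : OnC T S) (hT : T ≠ 0) (hS : S ≠ 0) :
    (3 * (z1F T S) ^ 2 + aF T S) * (3 * (z2F T S) ^ 2 + aF T S) = w ^ 12 := by
  have hu := uu_ne hT
  have hx := xx_ne hT hS
  have iu : (uu T)⁻¹ * uu T = 1 := inv_mul_cancel₀ hu
  have hz1 : z1F T S = (vv T S * (uu T)⁻¹ / 3 + uu T) / 2 := by
    rw [z1F, div_eq_mul_inv (vv T S), mul_inv]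
    ring
  have h31 : 3 * (z1F T S) ^ 2 + aF T S = ((uu T) ^ 2 + vv T S) / 2 - 1 := by
    rw [aF, z2F, hz1]
    linear_combination (vv T S / 2) * iu
  have h32 : 3 * (z2F T S) ^ 2 + aF T S = ((uu T) ^ 2 - vv T S) / 2 - 1 := by
    rw [aF, z2F, hz1]
    linear_combination (-(vv T S) / 2) * iu
  rw [h31, h32, hu2_lemma hC hT hS, vv]
  field_simp [hx]
  ring

end Twelfth

/-- **There are infinitely many 12th-root multiplier sections of period 2.**
The set of triples `(a, b, z₁) ∈ ℂ(w)³` such that, with `z₂ := z₁³ + a·z₁ + b`,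
one has `z₂ ≠ z₁`, `z₂³ + a·z₂ + b = z₁`, and `(3z₁² + a)(3z₂² + a) = w¹²`,
is infinite. -/
theorem twelfth_root_multiplier_sections_period_two_infinite :
    {p : RatFunc ℂ × RatFunc ℂ × RatFunc ℂ |
        p.2.2 ^ 3 + p.1 * p.2.2 + p.2.1 ≠ p.2.2 ∧
        (p.2.2 ^ 3 + p.1 * p.2.2 + p.2.1) ^ 3
            + p.1 * (p.2.2 ^ 3 + p.1 * p.2.2 + p.2.1) + p.2.1 = p.2.2 ∧
        (3 * p.2.2 ^ 2 + p.1) * (3 * (p.2.2 ^ 3 + p.1 * p.2.2 + p.2.1) ^ 2 + p.1)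
            = RatFunc.X ^ 12}.Infinite := by
  classical
  apply Set.infinite_of_injective_forall_mem (f := Twelfth.trip)
  · -- injectivity
    intro n m heq
    simp only [Twelfth.trip, Prod.mk.injEq] at heq
    obtain ⟨ha, hb, hz⟩ := heq
    have hz2 : Twelfth.z2F (Twelfth.Q n).1 (Twelfth.Q n).2
        = Twelfth.z2F (Twelfth.Q m).1 (Twelfth.Q m).2 := by
      rw [← Twelfth.hE_lemma, ← Twelfth.hE_lemma, ha, hb, hz]
    have huu : Twelfth.uu (Twelfth.Q n).1 = Twelfth.uu (Twelfth.Q m).1 := by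
      have h1 : Twelfth.uu (Twelfth.Q n).1
          = Twelfth.z1F (Twelfth.Q n).1 (Twelfth.Q n).2
            - Twelfth.z2F (Twelfth.Q n).1 (Twelfth.Q n).2 := by
        rw [Twelfth.z2F]; ring
      have h2 : Twelfth.uu (Twelfth.Q m).1
          = Twelfth.z1F (Twelfth.Q m).1 (Twelfth.Q m).2
            - Twelfth.z2F (Twelfth.Q m).1 (Twelfth.Q m).2 := by
        rw [Twelfth.z2F]; ring
      rw [h1, h2, hz, hz2]
    have hT : (Twelfth.Q n).1 = (Twelfth.Q m).1 := by
      rw [Twelfth.uu, Twelfth.uu, div_eq_mul_inv, div_eq_mul_inv] at huu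
      exact inv_injective (mul_left_cancel₀ (pow_ne_zero 4 Twelfth.w_ne) huu)
    obtain ⟨-, ⟨g, hg, hTexp⟩, -⟩ := Twelfth.good_all n
    obtain ⟨-, ⟨g', hg', hTexp'⟩, -⟩ := Twelfth.good_all m
    rw [hTexp, hTexp'] at hT
    have hcan : RatFunc.C (((n : ℂ) + 2) * Twelfth.dd) + Twelfth.om * g
        = RatFunc.C (((m : ℂ) + 2) * Twelfth.dd) + Twelfth.om * g' :=
      mul_left_cancel₀ (pow_ne_zero _ Twelfth.om_ne) hT
    have hsep : ((n : ℂ) + 2) * Twelfth.dd - ((m : ℂ) + 2) * Twelfth.dd = 0 := by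
      apply Twelfth.const_sep (Twelfth.reg_sub hg' hg)
      rw [map_sub]
      linear_combination hcan
    have hnm : (n : ℂ) = (m : ℂ) := by
      have h2 : ((n : ℂ) + 2 - ((m : ℂ) + 2)) * Twelfth.dd = 0 := by linear_combination hsep
      rcases mul_eq_zero.mp h2 with h | h
      · linear_combination h
      · exact absurd h Twelfth.dd_ne
    exact_mod_cast hnm
  · -- membership
    intro n
    have hC := (Twelfth.good_all n).1
    have hT := Twelfth.Q1_ne n
    have hS := Twelfth.Q2_ne n
    simp only [Set.mem_setOf_eq, Twelfth.trip]
    refine ⟨?_, ?_, ?_⟩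
    · rw [Twelfth.hE_lemma]
      intro h0
      apply Twelfth.uu_ne hT
      rw [show Twelfth.uu (Twelfth.Q n).1
        = Twelfth.z1F (Twelfth.Q n).1 (Twelfth.Q n).2
          - Twelfth.z2F (Twelfth.Q n).1 (Twelfth.Q n).2 from by rw [Twelfth.z2F]; ring,
        h0, sub_self]
    · rw [Twelfth.hE_lemma]
      exact Twelfth.cond2_lemma _ _
    · rw [Twelfth.hE_lemma]
      have hm := Twelfth.mult_lemma hC hT hS
      rw [Twelfth.w] at hm
      exact hm
end
end

section
/- Let F be a field of characteristic zero, let s ∈ F satisfy s² = −2, and let λ, d, e ∈ F with d ≠ 0, e ≠ 0, and e² = d³ − 4d² + 4λd. Define u := e²/(4d²), v := e(d² − 4λ)/(8d²), a := (4u² − 4u + 1 − λ)/(6u), b := s(8u² + 16u + λ − 1)v/(54u²), and z := −s(d² − 6d + 8λ)/(6e). Then, with z' := z³ + a·z + b, one has z'³ + a·z' + b = z and (3z² + a)(3z'² + a) = λ. (These are the explicit birational formulas identifying X₁(2) with the elliptic curve E₁ : e² = d(d² − 4d + 4λ): a point of E₁ yields a cubic z³ + az + b with a marked point z of period dividing 2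 and multiplier λ.) -/
set_option maxHeartbeats 4000000
set_option maxRecDepth 100000

/-- **Explicit identification of `X₁(2)` with the elliptic curve `E₁`.**
Over a field `F` of characteristic zero with `s² = −2`, given a point `(d, e)` of
`E₁ : e² = d³ − 4d² + 4λd` with `d ≠ 0`, `e ≠ 0`, the formulas
`u := e²/(4d²)`, `v := e(d² − 4λ)/(8d²)`, `a := (4u² − 4u + 1 − λ)/(6u)`,
`b := s(8u² + 16u + λ − 1)v/(54u²)`, `z := −s(d² − 6d + 8λ)/(6e)` produce a cubic
`z³ + az + b` with a marked point `z` of period dividing 2 and multiplier `λ`. -/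
theorem explicit_formulas_X1_two
    {F : Type*} [Field F] [CharZero F]
    (s : F) (hs : s ^ 2 = -2)
    (lam d e : F) (hd : d ≠ 0) (he0 : e ≠ 0)
    (he : e ^ 2 = d ^ 3 - 4 * d ^ 2 + 4 * lam * d)
    (u v a b z : F)
    (hu : u = e ^ 2 / (4 * d ^ 2))
    (hv : v = e * (d ^ 2 - 4 * lam) / (8 * d ^ 2))
    (ha : a = (4 * u ^ 2 - 4 * u + 1 - lam) / (6 * u))
    (hb : b = s * (8 * u ^ 2 + 16 * u + lam - 1) * v / (54 * u ^ 2))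
    (hz : z = -(s * (d ^ 2 - 6 * d + 8 * lam)) / (6 * e)) :
    (z ^ 3 + a * z + b) ^ 3 + a * (z ^ 3 + a * z + b) + b = z ∧
    (3 * z ^ 2 + a) * (3 * (z ^ 3 + a * z + b) ^ 2 + a) = lam := by
  obtain ⟨P, hPdef⟩ : ∃ P, P = d ^ 2 - 4 * d + 4 * lam := ⟨_, rfl⟩
  have hP : P ≠ 0 := by
    intro h
    apply he0
    have h2 : e ^ 2 = d * P := by rw [he, hPdef]; ring
    rw [h, mul_zero] at h2
    exact pow_eq_zero_iff (n := 2) (by norm_num) |>.mp h2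
  have hePr : e ^ 2 = d * P := by rw [he, hPdef]; ring
  have hu0 : u ≠ 0 := by
    rw [hu]
    exact div_ne_zero (pow_ne_zero 2 he0) (mul_ne_zero (by norm_num) (pow_ne_zero 2 hd))
  have hU2 : u * (4 * d ^ 2) = e ^ 2 := by
    rw [hu]; exact div_mul_cancel₀ _ (mul_ne_zero (by norm_num) (pow_ne_zero 2 hd))
  have hV2 : v * (8 * d ^ 2) = e * (d ^ 2 - 4 * lam) := by
    rw [hv]; exact div_mul_cancel₀ _ (mul_ne_zero (by norm_num) (pow_ne_zero 2 hd))
  have hA2 : a * (6 * u) = 4 * u ^ 2 - 4 * u + 1 - lam := by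
    rw [ha]; exact div_mul_cancel₀ _ (mul_ne_zero (by norm_num) hu0)
  have hB2 : b * (54 * u ^ 2) = s * (8 * u ^ 2 + 16 * u + lam - 1) * v := by
    rw [hb]; exact div_mul_cancel₀ _ (mul_ne_zero (by norm_num) (pow_ne_zero 2 hu0))
  have hZ2 : z * (6 * e) = -(s * (d ^ 2 - 6 * d + 8 * lam)) := by
    rw [hz]; exact div_mul_cancel₀ _ (mul_ne_zero (by norm_num) he0)
  have hDEU : ∀ (i j k : ℕ), d ^ i * e ^ j * u ^ k ≠ 0 := fun i j k =>
    mul_ne_zero (mul_ne_zero (pow_ne_zero i hd) (pow_ne_zero j he0)) (pow_ne_zero k hu0)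
  have hA3 : a * (6 * (d * P)) = P ^ 2 - 4 * d * P + 4 * d ^ 2 * (1 - lam) := by
    have key : d ^ 2 * e ^ 2 * u ^ 2 *
        (a * (6 * (d * P)) - (P ^ 2 - 4 * d * P + 4 * d ^ 2 * (1 - lam))) = 0 := by
      linear_combination (u * e ^ 2 * d ^ 3 * P) * hA2 +
      ((1/4) * e ^ 2 * d * P - (1/4) * e ^ 2 * d * P * lam - (1/4) * e ^ 4 + (1/4) * e ^ 4 * lam - u * e ^ 2 * d ^ 2 + u * e ^ 2 * d ^ 2 * lam + u ^ 2 * e ^ 2 * d * P) * hU2 +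
      (- (1/4) * e ^ 4 + (1/4) * e ^ 4 * lam + u ^ 2 * e ^ 2 * d * P) * hePr
    exact sub_eq_zero.mp ((mul_eq_zero.mp key).resolve_left (hDEU 2 2 2))
  have hB3 : b * (54 * (d ^ 2 * P ^ 2)) =
      s * e * ((P ^ 2 + 8 * d * P + 2 * d ^ 2 * (lam - 1)) * (d ^ 2 - 4 * lam)) := by
    have key : d ^ 4 * e ^ 6 * u ^ 4 *
        (b * (54 * (d ^ 2 * P ^ 2)) -
          s * e * ((P ^ 2 + 8 * d * P + 2 * d ^ 2 * (lam - 1)) * (d ^ 2 - 4 * lam))) = 0 := by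
      linear_combination (u ^ 2 * e ^ 6 * d ^ 6 * P ^ 2) * hB2 +
      (- (1/8) * u ^ 2 * s * e ^ 6 * d ^ 4 * P ^ 2 + (1/8) * u ^ 2 * s * e ^ 6 * d ^ 4 * P ^ 2 * lam + 2 * u ^ 3 * s * e ^ 6 * d ^ 4 * P ^ 2 + u ^ 4 * s * e ^ 6 * d ^ 4 * P ^ 2) * hV2 +
      (- (1/128) * s * e ^ 9 * d ^ 2 * P ^ 2 + (1/128) * s * e ^ 9 * d ^ 2 * P ^ 2 * lam + (1/128) * s * e ^ 13 - (1/128) * s * e ^ 13 * lam + (1/8) * u * s * e ^ 7 * d ^ 2 * P ^ 2 * lam - (1/8) * u * s * e ^ 7 * d ^ 2 * P ^ 2 * lam ^ 2 - (1/32) * u * s * e ^ 7 * d ^ 4 * P ^ 2 + (1/32) * u * s * e ^ 7 * d ^ 4 * P ^ 2 * lam + (1/8) * u * s * e ^ 9 * d ^ 2 * P ^ 2 - (1/8) * u * s * e ^ 11 * lam + (1/8) * u * s * e ^ 11 * lam ^ 2 - (1/8) * u * s * e ^ 11 * d * P + (1/32) * u * s * e ^ 11 * d ^ 2 - (1/32)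 * u * s * e ^ 11 * d ^ 2 * lam - 2 * u ^ 2 * s * e ^ 7 * d ^ 2 * P ^ 2 * lam + (1/2) * u ^ 2 * s * e ^ 7 * d ^ 4 * P ^ 2 + 2 * u ^ 2 * s * e ^ 9 * d * P * lam - (1/2) * u ^ 2 * s * e ^ 9 * d ^ 2 * lam + (1/2) * u ^ 2 * s * e ^ 9 * d ^ 2 * lam ^ 2 - (1/2) * u ^ 2 * s * e ^ 9 * d ^ 3 * P + (1/8) * u ^ 2 * s * e ^ 9 * d ^ 4 - (1/8) * u ^ 2 * s * e ^ 9 * d ^ 4 * lam + 8 * u ^ 3 * s * e ^ 7 * d ^ 3 * P * lam - 2 * u ^ 3 * s * e ^ 7 * d ^ 4 * lam + 2 * u ^ 3 * s * e ^ 7 * d ^ 4 * lam ^ 2 - 2 * u ^ 3 * s * e ^ 7 * d ^ 5 * P + (1/2) * u ^ 3 * s * e ^ 7 * d ^ 6 - (1/2) * u ^ 3 * s * e ^ 7 * d ^ 6 * lam) * hU2 +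
      ((1/128) * s * e ^ 11 * d * P - (1/128) * s * e ^ 11 * d * P * lam + (1/128) * s * e ^ 13 - (1/128) * s * e ^ 13 * lam - (1/8) * u * s * e ^ 9 * d * P * lam + (1/8) * u * s * e ^ 9 * d * P * lam ^ 2 - (1/8) * u * s * e ^ 11 * lam + (1/8) * u * s * e ^ 11 * lam ^ 2 - (1/8) * u * s * e ^ 11 * d * P + 2 * u ^ 2 * s * e ^ 9 * d * P * lam) * hePr
    exact sub_eq_zero.mp ((mul_eq_zero.mp key).resolve_left (hDEU 4 6 4))
  have hZ3 : z * (6 * (d * P)) = -(s * e * (d ^ 2 - 6 * d + 8 * lam)) := by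
    have key : d ^ 2 * e ^ 1 * u ^ 1 *
        (z * (6 * (d * P)) - -(s * e * (d ^ 2 - 6 * d + 8 * lam))) = 0 := by
      linear_combination (- 2 * s * d * P * lam + (3/2) * s * d ^ 2 * P - (1/4) * s * d ^ 3 * P + 2 * s * e ^ 2 * lam - (3/2) * s * e ^ 2 * d + (1/4) * s * e ^ 2 * d ^ 2) * hU2 +
      (u * d ^ 3 * P) * hZ2 +
      (2 * s * e ^ 2 * lam - (3/2) * s * e ^ 2 * d + (1/4) * s * e ^ 2 * d ^ 2) * hePr
    exact sub_eq_zero.mp ((mul_eq_zero.mp key).resolve_left (hDEU 2 1 1))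
  set F1 := z ^ 3 + a * z + b with hF1def
  have hF : F1 * (3 * (d * P ^ 2)) =
      s * e * (8 * lam ^ 2 + (6 * d ^ 2 - 20 * d) * lam + d ^ 4 - 7 * d ^ 3 + 12 * d ^ 2) := by
    have key : d ^ 2 * P * ((z ^ 3 + a * z + b) * (3 * (d * P ^ 2)) -
        s * e * (8 * lam ^ 2 + (6 * d ^ 2 - 20 * d) * lam + d ^ 4 - 7 * d ^ 3 + 12 * d ^ 2)) = 0 := by
      linear_combination ((1/2) * z * d ^ 2 * P ^ 2) * hA3 +
      ((1/18) * d * P) * hB3 +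
      ((1/12) * d * P ^ 3 - (1/3) * d ^ 2 * P ^ 2 + (1/3) * d ^ 3 * P - (1/3) * d ^ 3 * P * lam + (8/9) * s ^ 2 * e ^ 2 * lam ^ 2 - (4/3) * s ^ 2 * e ^ 2 * d * lam + (1/2) * s ^ 2 * e ^ 2 * d ^ 2 + (2/9) * s ^ 2 * e ^ 2 * d ^ 2 * lam - (1/6) * s ^ 2 * e ^ 2 * d ^ 3 + (1/72) * s ^ 2 * e ^ 2 * d ^ 4 - (2/3) * z * s * e * d * P * lam + (1/2) * z * s * e * d ^ 2 * P - (1/12) * z * s * e * d ^ 3 * P + (1/2) * z ^ 2 * d ^ 2 * P ^ 2) * hZ3 +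
      (- (64/9) * s * e ^ 3 * lam ^ 3 + 16 * s * e ^ 3 * d * lam ^ 2 - 12 * s * e ^ 3 * d ^ 2 * lam - (8/3) * s * e ^ 3 * d ^ 2 * lam ^ 2 + 3 * s * e ^ 3 * d ^ 3 + 4 * s * e ^ 3 * d ^ 3 * lam - (3/2) * s * e ^ 3 * d ^ 4 - (1/3) * s * e ^ 3 * d ^ 4 * lam + (1/4) * s * e ^ 3 * d ^ 5 - (1/72) * s * e ^ 3 * d ^ 6) * hs +
      ((128/9) * s * e * lam ^ 3 - 32 * s * e * d * lam ^ 2 + 24 * s * e * d ^ 2 * lam + (16/3) * s * e * d ^ 2 * lam ^ 2 - 6 * s * e * d ^ 3 - 8 * s * e * d ^ 3 * lam + 3 * s * e * d ^ 4 + (2/3) * s * e * d ^ 4 * lam - (1/2) * s * e * d ^ 5 + (1/36) * s * e * d ^ 6) * hePr +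
      (- (32/9) * s * e * d * P * lam ^ 2 - (8/9) * s * e * d * P ^ 2 * lam + (58/9) * s * e * d ^ 2 * P * lam + (1/2) * s * e * d ^ 2 * P ^ 2 - 4 * s * e * d ^ 3 * P - s * e * d ^ 3 * P * lam - (1/36) * s * e * d ^ 3 * P ^ 2 + (25/18) * s * e * d ^ 4 * P - (1/36) * s * e * d ^ 5 * P) * hPdef
    rw [hF1def]
    exact sub_eq_zero.mp ((mul_eq_zero.mp key).resolve_left
      (mul_ne_zero (pow_ne_zero 2 hd) hP))
  constructor
  · have key : d ^ 3 * P ^ 6 * ((F1 ^ 3 + a * F1 + b) - z) = 0 := by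
      linear_combination ((4/9) * s * e * d * P ^ 3 * lam ^ 2 - (10/9) * s * e * d ^ 2 * P ^ 3 * lam + (2/3) * s * e * d ^ 3 * P ^ 3 + (1/3) * s * e * d ^ 3 * P ^ 3 * lam - (7/18) * s * e * d ^ 4 * P ^ 3 + (1/18) * s * e * d ^ 5 * P ^ 3) * hA3 +
      ((1/54) * d * P ^ 4) * hB3 +
      (- (1/6) * d ^ 2 * P ^ 5) * hZ3 +
      ((64/27) * s ^ 2 * e ^ 2 * lam ^ 4 - (320/27) * s ^ 2 * e ^ 2 * d * lam ^ 3 + (592/27) * s ^ 2 * e ^ 2 * d ^ 2 * lam ^ 2 + (32/9) * s ^ 2 * e ^ 2 * d ^ 2 * lam ^ 3 - (160/9) * s ^ 2 * e ^ 2 * d ^ 3 * lam - (352/27) * s ^ 2 * e ^ 2 * d ^ 3 * lam ^ 2 + (16/3) * s ^ 2 * e ^ 2 * d ^ 4 + (424/27) * s ^ 2 * e ^ 2 * d ^ 4 * lam + (52/27) * s ^ 2 * e ^ 2 * d ^ 4 * lam ^ 2 - (56/9) * s ^ 2 * e ^ 2 * d ^ 5 - (124/27) * s ^ 2 * e ^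 2 * d ^ 5 * lam + (73/27) * s ^ 2 * e ^ 2 * d ^ 6 + (4/9) * s ^ 2 * e ^ 2 * d ^ 6 * lam - (14/27) * s ^ 2 * e ^ 2 * d ^ 7 + (1/27) * s ^ 2 * e ^ 2 * d ^ 8 + (1/3) * a * d ^ 2 * P ^ 4 + (8/9) * F1 * s * e * d * P ^ 2 * lam ^ 2 - (20/9) * F1 * s * e * d ^ 2 * P ^ 2 * lam + (4/3) * F1 * s * e * d ^ 3 * P ^ 2 + (2/3) * F1 * s * e * d ^ 3 * P ^ 2 * lam - (7/9) * F1 * s * e * d ^ 4 * P ^ 2 + (1/9) * F1 * s * e * d ^ 5 * P ^ 2 + (1/3) * F1 ^ 2 * d ^ 2 * P ^ 4) * hF +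
      ((512/27) * s * e ^ 3 * lam ^ 6 - (1280/9) * s * e ^ 3 * d * lam ^ 5 + (3968/9) * s * e ^ 3 * d ^ 2 * lam ^ 4 + (128/3) * s * e ^ 3 * d ^ 2 * lam ^ 5 - (19520/27) * s * e ^ 3 * d ^ 3 * lam ^ 3 - (2368/9) * s * e ^ 3 * d ^ 3 * lam ^ 4 + (1984/3) * s * e ^ 3 * d ^ 4 * lam ^ 2 + (5792/9) * s * e ^ 3 * d ^ 4 * lam ^ 3 + (352/9) * s * e ^ 3 * d ^ 4 * lam ^ 4 - 320 * s * e ^ 3 * d ^ 5 * lam - (7024/9) * s * e ^ 3 * d ^ 5 * lam ^ 2 - (1712/9) * s * e ^ 3 * d ^ 5 * lam ^ 3 + 64 * s * e ^ 3 * d ^ 6 + (1408/3) * s * e ^ 3 * d ^ 6 * lam + 344 * s * e ^ 3 * d ^ 6 * lam ^ 2 + (56/3) * s * e ^ 3 * d ^ 6 * lam ^ 3 - 112 * s * e ^ 3 * d ^ 7 - (2468/9) * s * e ^ 3 * d ^ 7 * lam - (604/9) * s * e ^ 3 * d ^ 7 * lam ^ 2 + (244/3) * s * e ^ 3 * d ^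 8 + (718/9) * s * e ^ 3 * d ^ 8 * lam + (44/9) * s * e ^ 3 * d ^ 8 * lam ^ 2 - (847/27) * s * e ^ 3 * d ^ 9 - (104/9) * s * e ^ 3 * d ^ 9 * lam + (61/9) * s * e ^ 3 * d ^ 10 + (2/3) * s * e ^ 3 * d ^ 10 * lam - (7/9) * s * e ^ 3 * d ^ 11 + (1/27) * s * e ^ 3 * d ^ 12) * hs +
      (- (1024/27) * s * e * lam ^ 6 + (2560/9) * s * e * d * lam ^ 5 - (7936/9) * s * e * d ^ 2 * lam ^ 4 - (256/3) * s * e * d ^ 2 * lam ^ 5 + (39040/27) * s * e * d ^ 3 * lam ^ 3 + (4736/9) * s * e * d ^ 3 * lam ^ 4 - (3968/3) * s * e * d ^ 4 * lam ^ 2 - (11584/9) * s * e * d ^ 4 * lam ^ 3 - (704/9) * s * e * d ^ 4 * lam ^ 4 + 640 * s * e * d ^ 5 * lam + (14048/9) * s * e * d ^ 5 * lam ^ 2 + (3424/9) * s * e * d ^ 5 * lam ^ 3 - 128 * s * e * d ^ 6 - (2816/3) * s * e * d ^ 6 * lam - 688 * s * e * d ^ 6 * lam ^ 2 - (112/3)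 * s * e * d ^ 6 * lam ^ 3 + 224 * s * e * d ^ 7 + (4936/9) * s * e * d ^ 7 * lam + (1208/9) * s * e * d ^ 7 * lam ^ 2 - (488/3) * s * e * d ^ 8 - (1436/9) * s * e * d ^ 8 * lam - (88/9) * s * e * d ^ 8 * lam ^ 2 + (1694/27) * s * e * d ^ 9 + (208/9) * s * e * d ^ 9 * lam - (122/9) * s * e * d ^ 10 - (4/3) * s * e * d ^ 10 * lam + (14/9) * s * e * d ^ 11 - (2/27) * s * e * d ^ 12) * hePr +
      ((256/27) * s * e * d * P * lam ^ 5 + (64/27) * s * e * d * P ^ 2 * lam ^ 4 + (16/27) * s * e * d * P ^ 3 * lam ^ 3 + (4/27) * s * e * d * P ^ 4 * lam ^ 2 - (2/27) * s * e * d * P ^ 5 * lam - (1664/27) * s * e * d ^ 2 * P * lam ^ 4 - (352/27) * s * e * d ^ 2 * P ^ 2 * lam ^ 3 - (8/3) * s * e * d ^ 2 * P ^ 3 * lam ^ 2 - (2/27) * s * e * d ^ 2 * P ^ 4 * lam + (4288/27) * s * e * d ^ 3 * P * lam ^ 3 + (512/27) * s * e * d ^ 3 * P * lam ^ 4 + (80/3)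 * s * e * d ^ 3 * P ^ 2 * lam ^ 2 + (112/27) * s * e * d ^ 3 * P ^ 2 * lam ^ 3 + (32/9) * s * e * d ^ 3 * P ^ 3 * lam + (4/3) * s * e * d ^ 3 * P ^ 3 * lam ^ 2 - (1/3) * s * e * d ^ 3 * P ^ 4 + (1/3) * s * e * d ^ 3 * P ^ 4 * lam + (1/54) * s * e * d ^ 3 * P ^ 5 - (608/3) * s * e * d ^ 4 * P * lam ^ 2 - (2624/27) * s * e * d ^ 4 * P * lam ^ 3 - 24 * s * e * d ^ 4 * P ^ 2 * lam - (152/9) * s * e * d ^ 4 * P ^ 2 * lam ^ 2 - (4/3) * s * e * d ^ 4 * P ^ 3 - (10/3) * s * e * d ^ 4 * P ^ 3 * lam - (4/27) * s * e * d ^ 4 * P ^ 4 + 128 * s * e * d ^ 5 * P * lam + (1664/9) * s * e * d ^ 5 * P * lam ^ 2 + (400/27) * s * e * d ^ 5 * P * lam ^ 3 + 8 * s * e * d ^ 5 * P ^ 2 + (68/3) * s * e * d ^ 5 * P ^ 2 * lam + (8/3) * s * e * d ^ 5 * P ^ 2 * lam ^ 2 + (16/9) * s * e * d ^ 5 * P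 ^ 3 + (2/3) * s * e * d ^ 5 * P ^ 3 * lam + (2/27) * s * e * d ^ 5 * P ^ 4 - 32 * s * e * d ^ 6 * P - (464/3) * s * e * d ^ 6 * P * lam - 56 * s * e * d ^ 6 * P * lam ^ 2 - 10 * s * e * d ^ 6 * P ^ 2 - (64/9) * s * e * d ^ 6 * P ^ 2 * lam - (2/3) * s * e * d ^ 6 * P ^ 3 + 48 * s * e * d ^ 7 * P + (628/9) * s * e * d ^ 7 * P * lam + (152/27) * s * e * d ^ 7 * P * lam ^ 2 + (14/3) * s * e * d ^ 7 * P ^ 2 + (20/27) * s * e * d ^ 7 * P ^ 2 * lam + (2/27) * s * e * d ^ 7 * P ^ 3 - (86/3) * s * e * d ^ 8 * P - (376/27) * s * e * d ^ 8 * P * lam - (26/27) * s * e * d ^ 8 * P ^ 2 + (230/27) * s * e * d ^ 9 * P + (28/27) * s * e * d ^ 9 * P * lam + (2/27) * s * e * d ^ 9 * P ^ 2 - (34/27) * s * e * d ^ 10 * P + (2/27) * s * e * d ^ 11 * P) * hPdef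
    exact sub_eq_zero.mp ((mul_eq_zero.mp key).resolve_left
      (mul_ne_zero (pow_ne_zero 3 hd) (pow_ne_zero 6 hP)))
  · have key : d ^ 4 * P ^ 6 * ((3 * z ^ 2 + a) * (3 * F1 ^ 2 + a) - lam) = 0 := by
      linear_combination ((1/36) * d ^ 2 * P ^ 6 - (1/9) * d ^ 3 * P ^ 5 + (1/9) * d ^ 4 * P ^ 4 - (1/9) * d ^ 4 * P ^ 4 * lam + (32/9) * s ^ 2 * e ^ 2 * d * P * lam ^ 4 - (160/9) * s ^ 2 * e ^ 2 * d ^ 2 * P * lam ^ 3 + (296/9) * s ^ 2 * e ^ 2 * d ^ 3 * P * lam ^ 2 + (16/3) * s ^ 2 * e ^ 2 * d ^ 3 * P * lam ^ 3 - (80/3) * s ^ 2 * e ^ 2 * d ^ 4 * P * lam - (176/9) * s ^ 2 * e ^ 2 * d ^ 4 * P * lam ^ 2 + 8 * s ^ 2 * e ^ 2 * d ^ 5 * P + (212/9) * s ^ 2 * e ^ 2 * d ^ 5 * P * lam + (26/9) * s ^ 2 * e ^ 2 * d ^ 5 * P * lam ^ 2 - (28/3) * s ^ 2 * e ^ 2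 * d ^ 6 * P - (62/9) * s ^ 2 * e ^ 2 * d ^ 6 * P * lam + (73/18) * s ^ 2 * e ^ 2 * d ^ 7 * P + (2/3) * s ^ 2 * e ^ 2 * d ^ 7 * P * lam - (7/9) * s ^ 2 * e ^ 2 * d ^ 8 * P + (1/18) * s ^ 2 * e ^ 2 * d ^ 9 * P + (1/2) * z ^ 2 * d ^ 3 * P ^ 5 + (1/6) * a * d ^ 3 * P ^ 5) * hA3 +
      (- (1/9) * s * e * d * P ^ 5 * lam + (4/9) * s * e * d ^ 2 * P ^ 4 * lam + (1/12) * s * e * d ^ 2 * P ^ 5 - (4/9) * s * e * d ^ 3 * P ^ 3 * lam + (4/9) * s * e * d ^ 3 * P ^ 3 * lam ^ 2 - (1/3) * s * e * d ^ 3 * P ^ 4 - (1/72) * s * e * d ^ 3 * P ^ 5 + (1/3) * s * e * d ^ 4 * P ^ 3 - (1/3) * s * e * d ^ 4 * P ^ 3 * lam + (1/18) * s * e * d ^ 4 * P ^ 4 - (1/18) * s * e * d ^ 5 * P ^ 3 + (1/18) * s * e * d ^ 5 * P ^ 3 * lam - (128/9) * s ^ 3 * e ^ 3 * lam ^ 5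 + (736/9) * s ^ 3 * e ^ 3 * d * lam ^ 4 - (1664/9) * s ^ 3 * e ^ 3 * d ^ 2 * lam ^ 3 - (208/9) * s ^ 3 * e ^ 3 * d ^ 2 * lam ^ 4 + (616/3) * s ^ 3 * e ^ 3 * d ^ 3 * lam ^ 2 + (928/9) * s ^ 3 * e ^ 3 * d ^ 3 * lam ^ 3 - 112 * s ^ 3 * e ^ 3 * d ^ 4 * lam - (508/3) * s ^ 3 * e ^ 3 * d ^ 4 * lam ^ 2 - (128/9) * s ^ 3 * e ^ 3 * d ^ 4 * lam ^ 3 + 24 * s ^ 3 * e ^ 3 * d ^ 5 + (364/3) * s ^ 3 * e ^ 3 * d ^ 5 * lam + 46 * s ^ 3 * e ^ 3 * d ^ 5 * lam ^ 2 - 32 * s ^ 3 * e ^ 3 * d ^ 6 - (146/3) * s ^ 3 * e ^ 3 * d ^ 6 * lam - (37/9) * s ^ 3 * e ^ 3 * d ^ 6 * lam ^ 2 + (101/6) * s ^ 3 * e ^ 3 * d ^ 7 + (77/9) * s ^ 3 * e ^ 3 * d ^ 7 * lam - (157/36) * s ^ 3 * e ^ 3 * d ^ 8 - (5/9) * s ^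 3 * e ^ 3 * d ^ 8 * lam + (5/9) * s ^ 3 * e ^ 3 * d ^ 9 - (1/36) * s ^ 3 * e ^ 3 * d ^ 10 + (1/12) * z * d ^ 2 * P ^ 6 - (1/3) * z * d ^ 3 * P ^ 5 + (1/3) * z * d ^ 4 * P ^ 4 - (1/3) * z * d ^ 4 * P ^ 4 * lam + (32/3) * z * s ^ 2 * e ^ 2 * d * P * lam ^ 4 - (160/3) * z * s ^ 2 * e ^ 2 * d ^ 2 * P * lam ^ 3 + (296/3) * z * s ^ 2 * e ^ 2 * d ^ 3 * P * lam ^ 2 + 16 * z * s ^ 2 * e ^ 2 * d ^ 3 * P * lam ^ 3 - 80 * z * s ^ 2 * e ^ 2 * d ^ 4 * P * lam - (176/3) * z * s ^ 2 * e ^ 2 * d ^ 4 * P * lam ^ 2 + 24 * z * s ^ 2 * e ^ 2 * d ^ 5 * P + (212/3) * z * s ^ 2 * e ^ 2 * d ^ 5 * P * lam + (26/3) * z * s ^ 2 * e ^ 2 * d ^ 5 * P * lam ^ 2 - 28 * z * s ^ 2 * e ^ 2 * d ^ 6 * P - (62/3) * z * s ^ 2 * e ^ 2 * d ^ 6 *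 P * lam + (73/6) * z * s ^ 2 * e ^ 2 * d ^ 7 * P + 2 * z * s ^ 2 * e ^ 2 * d ^ 7 * P * lam - (7/3) * z * s ^ 2 * e ^ 2 * d ^ 8 * P + (1/6) * z * s ^ 2 * e ^ 2 * d ^ 9 * P) * hZ3 +
      (8 * z ^ 2 * s * e * d ^ 2 * P ^ 2 * lam ^ 2 - 20 * z ^ 2 * s * e * d ^ 3 * P ^ 2 * lam + 12 * z ^ 2 * s * e * d ^ 4 * P ^ 2 + 6 * z ^ 2 * s * e * d ^ 4 * P ^ 2 * lam - 7 * z ^ 2 * s * e * d ^ 5 * P ^ 2 + z ^ 2 * s * e * d ^ 6 * P ^ 2 + (8/3) * a * s * e * d ^ 2 * P ^ 2 * lam ^ 2 - (20/3) * a * s * e * d ^ 3 * P ^ 2 * lam + 4 * a * s * e * d ^ 4 * P ^ 2 + 2 * a * s * e * d ^ 4 * P ^ 2 * lam - (7/3) * a * s * e * d ^ 5 * P ^ 2 + (1/3) * a * s * e * d ^ 6 * P ^ 2 + 3 * F1 * z ^ 2 * d ^ 3 * P ^ 4 + F1 * a * d ^ 3 * P ^ 4) * hF +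
      ((32/9) * e ^ 2 * d * P ^ 3 * lam ^ 4 + (8/9) * e ^ 2 * d * P ^ 5 * lam ^ 2 - (128/9) * e ^ 2 * d ^ 2 * P ^ 2 * lam ^ 4 - (160/9) * e ^ 2 * d ^ 2 * P ^ 3 * lam ^ 3 - (32/9) * e ^ 2 * d ^ 2 * P ^ 4 * lam ^ 2 - (4/3) * e ^ 2 * d ^ 2 * P ^ 5 * lam + (128/9) * e ^ 2 * d ^ 3 * P * lam ^ 4 - (128/9) * e ^ 2 * d ^ 3 * P * lam ^ 5 + (640/9) * e ^ 2 * d ^ 3 * P ^ 2 * lam ^ 3 + (328/9) * e ^ 2 * d ^ 3 * P ^ 3 * lam ^ 2 + (16/9) * e ^ 2 * d ^ 3 * P ^ 3 * lam ^ 3 + (16/3) * e ^ 2 * d ^ 3 * P ^ 4 * lam + (1/2) * e ^ 2 * d ^ 3 * P ^ 5 + (2/9) * e ^ 2 * d ^ 3 * P ^ 5 * lam - (640/9) * e ^ 2 * d ^ 4 * P * lam ^ 3 + (640/9) * e ^ 2 * d ^ 4 * P * lam ^ 4 - (1184/9) * e ^ 2 * d ^ 4 * P ^ 2 * lam ^ 2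 - (64/3) * e ^ 2 * d ^ 4 * P ^ 2 * lam ^ 3 - 32 * e ^ 2 * d ^ 4 * P ^ 3 * lam - (128/9) * e ^ 2 * d ^ 4 * P ^ 3 * lam ^ 2 - 2 * e ^ 2 * d ^ 4 * P ^ 4 - (8/9) * e ^ 2 * d ^ 4 * P ^ 4 * lam - (1/6) * e ^ 2 * d ^ 4 * P ^ 5 + (1184/9) * e ^ 2 * d ^ 5 * P * lam ^ 2 - (992/9) * e ^ 2 * d ^ 5 * P * lam ^ 3 - (64/3) * e ^ 2 * d ^ 5 * P * lam ^ 4 + (320/3) * e ^ 2 * d ^ 5 * P ^ 2 * lam + (704/9) * e ^ 2 * d ^ 5 * P ^ 2 * lam ^ 2 + 10 * e ^ 2 * d ^ 5 * P ^ 3 + (202/9) * e ^ 2 * d ^ 5 * P ^ 3 * lam + 2 * e ^ 2 * d ^ 5 * P ^ 3 * lam ^ 2 + (2/3) * e ^ 2 * d ^ 5 * P ^ 4 + (1/72) * e ^ 2 * d ^ 5 * P ^ 5 - (320/3) * e ^ 2 * d ^ 6 * P * lam + (256/9) * e ^ 2 * d ^ 6 * P * lam ^ 2 + (704/9) * e ^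 2 * d ^ 6 * P * lam ^ 3 - 32 * e ^ 2 * d ^ 6 * P ^ 2 - (848/9) * e ^ 2 * d ^ 6 * P ^ 2 * lam - (104/9) * e ^ 2 * d ^ 6 * P ^ 2 * lam ^ 2 - 10 * e ^ 2 * d ^ 6 * P ^ 3 - (56/9) * e ^ 2 * d ^ 6 * P ^ 3 * lam - (1/18) * e ^ 2 * d ^ 6 * P ^ 4 + 32 * e ^ 2 * d ^ 7 * P + (560/9) * e ^ 2 * d ^ 7 * P * lam - (248/3) * e ^ 2 * d ^ 7 * P * lam ^ 2 - (104/9) * e ^ 2 * d ^ 7 * P * lam ^ 3 + (112/3) * e ^ 2 * d ^ 7 * P ^ 2 + (248/9) * e ^ 2 * d ^ 7 * P ^ 2 * lam + (37/9) * e ^ 2 * d ^ 7 * P ^ 3 + (11/18) * e ^ 2 * d ^ 7 * P ^ 3 * lam - (112/3) * e ^ 2 * d ^ 8 * P + (88/9) * e ^ 2 * d ^ 8 * P * lam + (248/9) * e ^ 2 * d ^ 8 * P * lam ^ 2 - (146/9) * e ^ 2 * d ^ 8 * P ^ 2 - (8/3) * e ^ 2 * d ^ 8 * P ^ 2 * lam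 - (7/9) * e ^ 2 * d ^ 8 * P ^ 3 + (146/9) * e ^ 2 * d ^ 9 * P - (122/9) * e ^ 2 * d ^ 9 * P * lam - (8/3) * e ^ 2 * d ^ 9 * P * lam ^ 2 + (28/9) * e ^ 2 * d ^ 9 * P ^ 2 + (1/18) * e ^ 2 * d ^ 9 * P ^ 3 - (28/9) * e ^ 2 * d ^ 10 * P + (28/9) * e ^ 2 * d ^ 10 * P * lam - (2/9) * e ^ 2 * d ^ 10 * P ^ 2 + (2/9) * e ^ 2 * d ^ 11 * P - (2/9) * e ^ 2 * d ^ 11 * P * lam - (2048/9) * e ^ 4 * lam ^ 6 + (13312/9) * e ^ 4 * d * lam ^ 5 - (35456/9) * e ^ 4 * d ^ 2 * lam ^ 4 - (3584/9) * e ^ 4 * d ^ 2 * lam ^ 5 + 5504 * e ^ 4 * d ^ 3 * lam ^ 3 + (6272/3) * e ^ 4 * d ^ 3 * lam ^ 4 - 4256 * e ^ 4 * d ^ 4 * lam ^ 2 - (38848/9) * e ^ 4 * d ^ 4 * lam ^ 3 - (2464/9) * e ^ 4 * d ^ 4 * lam ^ 4 + 1728 * e ^ 4 * d ^ 5 * lam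 + 4384 * e ^ 4 * d ^ 5 * lam ^ 2 + (10016/9) * e ^ 4 * d ^ 5 * lam ^ 3 - 288 * e ^ 4 * d ^ 6 - 2192 * e ^ 4 * d ^ 6 * lam - (5008/3) * e ^ 4 * d ^ 6 * lam ^ 2 - (848/9) * e ^ 4 * d ^ 6 * lam ^ 3 + 432 * e ^ 4 * d ^ 7 + 1096 * e ^ 4 * d ^ 7 * lam + (2504/9) * e ^ 4 * d ^ 7 * lam ^ 2 - 266 * e ^ 4 * d ^ 8 - (2428/9) * e ^ 4 * d ^ 8 * lam - (154/9) * e ^ 4 * d ^ 8 * lam ^ 2 + 86 * e ^ 4 * d ^ 9 + (98/3) * e ^ 4 * d ^ 9 * lam - (277/18) * e ^ 4 * d ^ 10 - (14/9) * e ^ 4 * d ^ 10 * lam + (13/9) * e ^ 4 * d ^ 11 - (1/18) * e ^ 4 * d ^ 12 + (1024/9) * s ^ 2 * e ^ 4 * lam ^ 6 - (6656/9) * s ^ 2 * e ^ 4 * d * lam ^ 5 + (17728/9) * s ^ 2 * e ^ 4 * d ^ 2 * lam ^ 4 + (1792/9) * s ^ 2 * e ^ 4 * d ^ 2 * lam ^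 5 - 2752 * s ^ 2 * e ^ 4 * d ^ 3 * lam ^ 3 - (3136/3) * s ^ 2 * e ^ 4 * d ^ 3 * lam ^ 4 + 2128 * s ^ 2 * e ^ 4 * d ^ 4 * lam ^ 2 + (19424/9) * s ^ 2 * e ^ 4 * d ^ 4 * lam ^ 3 + (1232/9) * s ^ 2 * e ^ 4 * d ^ 4 * lam ^ 4 - 864 * s ^ 2 * e ^ 4 * d ^ 5 * lam - 2192 * s ^ 2 * e ^ 4 * d ^ 5 * lam ^ 2 - (5008/9) * s ^ 2 * e ^ 4 * d ^ 5 * lam ^ 3 + 144 * s ^ 2 * e ^ 4 * d ^ 6 + 1096 * s ^ 2 * e ^ 4 * d ^ 6 * lam + (2504/3) * s ^ 2 * e ^ 4 * d ^ 6 * lam ^ 2 + (424/9) * s ^ 2 * e ^ 4 * d ^ 6 * lam ^ 3 - 216 * s ^ 2 * e ^ 4 * d ^ 7 - 548 * s ^ 2 * e ^ 4 * d ^ 7 * lam - (1252/9) * s ^ 2 * e ^ 4 * d ^ 7 * lam ^ 2 + 133 * s ^ 2 * e ^ 4 * d ^ 8 + (1214/9) * s ^ 2 * e ^ 4 * d ^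 8 * lam + (77/9) * s ^ 2 * e ^ 4 * d ^ 8 * lam ^ 2 - 43 * s ^ 2 * e ^ 4 * d ^ 9 - (49/3) * s ^ 2 * e ^ 4 * d ^ 9 * lam + (277/36) * s ^ 2 * e ^ 4 * d ^ 10 + (7/9) * s ^ 2 * e ^ 4 * d ^ 10 * lam - (13/18) * s ^ 2 * e ^ 4 * d ^ 11 + (1/36) * s ^ 2 * e ^ 4 * d ^ 12) * hs +
      ((4096/9) * d * P * lam ^ 6 - (64/9) * d * P ^ 3 * lam ^ 4 - (16/9) * d * P ^ 5 * lam ^ 2 - (26624/9) * d ^ 2 * P * lam ^ 5 + (256/9) * d ^ 2 * P ^ 2 * lam ^ 4 + (320/9) * d ^ 2 * P ^ 3 * lam ^ 3 + (64/9) * d ^ 2 * P ^ 4 * lam ^ 2 + (8/3) * d ^ 2 * P ^ 5 * lam + (23552/3) * d ^ 3 * P * lam ^ 4 + (7424/9) * d ^ 3 * P * lam ^ 5 - (1280/9) * d ^ 3 * P ^ 2 * lam ^ 3 - (656/9) * d ^ 3 * P ^ 3 * lam ^ 2 - (32/9) * d ^ 3 * P ^ 3 * lam ^ 3 - (32/3)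 * d ^ 3 * P ^ 4 * lam - d ^ 3 * P ^ 5 - (4/9) * d ^ 3 * P ^ 5 * lam - (97792/9) * d ^ 4 * P * lam ^ 3 - (38912/9) * d ^ 4 * P * lam ^ 4 + (2368/9) * d ^ 4 * P ^ 2 * lam ^ 2 + (128/3) * d ^ 4 * P ^ 2 * lam ^ 3 + 64 * d ^ 4 * P ^ 3 * lam + (256/9) * d ^ 4 * P ^ 3 * lam ^ 2 + 4 * d ^ 4 * P ^ 4 + (16/9) * d ^ 4 * P ^ 4 * lam + (1/3) * d ^ 4 * P ^ 5 + (74240/9) * d ^ 5 * P * lam ^ 2 + (26560/3) * d ^ 5 * P * lam ^ 3 + (5312/9) * d ^ 5 * P * lam ^ 4 - (640/3) * d ^ 5 * P ^ 2 * lam - (1408/9) * d ^ 5 * P ^ 2 * lam ^ 2 - 20 * d ^ 5 * P ^ 3 - (404/9) * d ^ 5 * P ^ 3 * lam - 4 * d ^ 5 * P ^ 3 * lam ^ 2 - (4/3) * d ^ 5 * P ^ 4 - (1/36) * d ^ 5 * P ^ 5 - (9728/3) * d ^ 6 * P * lam - (79424/9) * d ^ 6 * P * lam ^ 2 - (21440/9)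 * d ^ 6 * P * lam ^ 3 + 64 * d ^ 6 * P ^ 2 + (1696/9) * d ^ 6 * P ^ 2 * lam + (208/9) * d ^ 6 * P ^ 2 * lam ^ 2 + 20 * d ^ 6 * P ^ 3 + (112/9) * d ^ 6 * P ^ 3 * lam + (1/9) * d ^ 6 * P ^ 4 + 512 * d ^ 7 * P + (38336/9) * d ^ 7 * P * lam + 3504 * d ^ 7 * P * lam ^ 2 + (1904/9) * d ^ 7 * P * lam ^ 3 - (224/3) * d ^ 7 * P ^ 2 - (496/9) * d ^ 7 * P ^ 2 * lam - (74/9) * d ^ 7 * P ^ 3 - (11/9) * d ^ 7 * P ^ 3 * lam - (2368/3) * d ^ 8 * P - (19904/9) * d ^ 8 * P * lam - (5504/9) * d ^ 8 * P * lam ^ 2 + (292/9) * d ^ 8 * P ^ 2 + (16/3) * d ^ 8 * P ^ 2 * lam + (14/9) * d ^ 8 * P ^ 3 + (4496/9) * d ^ 9 * P + (1700/3) * d ^ 9 * P * lam + (356/9) * d ^ 9 * P * lam ^ 2 - (56/9) * d ^ 9 * P ^ 2 - (1/9) * d ^ 9 * P ^ 3 - (1492/9) * d ^ 10 * P - (644/9)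 * d ^ 10 * P * lam + (4/9) * d ^ 10 * P ^ 2 + (91/3) * d ^ 11 * P + (32/9) * d ^ 11 * P * lam - (26/9) * d ^ 12 * P + (1/9) * d ^ 13 * P + (4096/9) * e ^ 2 * lam ^ 6 - (26624/9) * e ^ 2 * d * lam ^ 5 + (70912/9) * e ^ 2 * d ^ 2 * lam ^ 4 + (7168/9) * e ^ 2 * d ^ 2 * lam ^ 5 - 11008 * e ^ 2 * d ^ 3 * lam ^ 3 - (12544/3) * e ^ 2 * d ^ 3 * lam ^ 4 + 8512 * e ^ 2 * d ^ 4 * lam ^ 2 + (77696/9) * e ^ 2 * d ^ 4 * lam ^ 3 + (4928/9) * e ^ 2 * d ^ 4 * lam ^ 4 - 3456 * e ^ 2 * d ^ 5 * lam - 8768 * e ^ 2 * d ^ 5 * lam ^ 2 - (20032/9) * e ^ 2 * d ^ 5 * lam ^ 3 + 576 * e ^ 2 * d ^ 6 + 4384 * e ^ 2 * d ^ 6 * lam + (10016/3) * e ^ 2 * d ^ 6 * lam ^ 2 + (1696/9) * e ^ 2 * d ^ 6 * lam ^ 3 - 864 * e ^ 2 * d ^ 7 - 2192 * e ^ 2 *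 d ^ 7 * lam - (5008/9) * e ^ 2 * d ^ 7 * lam ^ 2 + 532 * e ^ 2 * d ^ 8 + (4856/9) * e ^ 2 * d ^ 8 * lam + (308/9) * e ^ 2 * d ^ 8 * lam ^ 2 - 172 * e ^ 2 * d ^ 9 - (196/3) * e ^ 2 * d ^ 9 * lam + (277/9) * e ^ 2 * d ^ 10 + (28/9) * e ^ 2 * d ^ 10 * lam - (26/9) * e ^ 2 * d ^ 11 + (1/9) * e ^ 2 * d ^ 12) * hePr +
      (- (1024/9) * d ^ 2 * P ^ 2 * lam ^ 5 - (256/9) * d ^ 2 * P ^ 3 * lam ^ 4 - (16/3) * d ^ 2 * P ^ 4 * lam ^ 3 - (4/3) * d ^ 2 * P ^ 5 * lam ^ 2 + (1/9) * d ^ 2 * P ^ 6 * lam + (1/36) * d ^ 2 * P ^ 7 + (5632/9) * d ^ 3 * P ^ 2 * lam ^ 4 + (1088/9) * d ^ 3 * P ^ 3 * lam ^ 3 + 16 * d ^ 3 * P ^ 4 * lam ^ 2 + (8/9) * d ^ 3 * P ^ 5 * lam - (1/3) * d ^ 3 * P ^ 6 - (12032/9) * d ^ 4 * P ^ 2 *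 lam ^ 3 - (1600/9) * d ^ 4 * P ^ 2 * lam ^ 4 - (1600/9) * d ^ 4 * P ^ 3 * lam ^ 2 - (112/3) * d ^ 4 * P ^ 3 * lam ^ 3 - (92/9) * d ^ 4 * P ^ 4 * lam - (64/9) * d ^ 4 * P ^ 4 * lam ^ 2 + d ^ 4 * P ^ 5 - (13/9) * d ^ 4 * P ^ 5 * lam + (1/36) * d ^ 4 * P ^ 6 + (12416/9) * d ^ 5 * P ^ 2 * lam ^ 2 + (2240/3) * d ^ 5 * P ^ 2 * lam ^ 3 + (304/3) * d ^ 5 * P ^ 3 * lam + (976/9) * d ^ 5 * P ^ 3 * lam ^ 2 - (8/9) * d ^ 5 * P ^ 4 + (80/9) * d ^ 5 * P ^ 4 * lam - (1/9) * d ^ 5 * P ^ 5 - (2048/3) * d ^ 6 * P ^ 2 * lam - (10192/9) * d ^ 6 * P ^ 2 * lam ^ 2 - (928/9) * d ^ 6 * P ^ 2 * lam ^ 3 - 16 * d ^ 6 * P ^ 3 - (820/9) * d ^ 6 * P ^ 3 * lam - (148/9) * d ^ 6 * P ^ 3 * lam ^ 2 + (1/9) * d ^ 6 * P ^ 4 -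 (13/9) * d ^ 6 * P ^ 4 * lam + 128 * d ^ 7 * P ^ 2 + (6560/9) * d ^ 7 * P ^ 2 * lam + (2752/9) * d ^ 7 * P ^ 2 * lam ^ 2 + (56/3) * d ^ 7 * P ^ 3 + (244/9) * d ^ 7 * P ^ 3 * lam - (496/3) * d ^ 8 * P ^ 2 - (2584/9) * d ^ 8 * P ^ 2 * lam - (244/9) * d ^ 8 * P ^ 2 * lam ^ 2 - (73/9) * d ^ 8 * P ^ 3 - (8/3) * d ^ 8 * P ^ 3 * lam + (752/9) * d ^ 9 * P ^ 2 + (148/3) * d ^ 9 * P ^ 2 * lam + (14/9) * d ^ 9 * P ^ 3 - (185/9) * d ^ 10 * P ^ 2 - (28/9) * d ^ 10 * P ^ 2 * lam - (1/9) * d ^ 10 * P ^ 3 + (22/9) * d ^ 11 * P ^ 2 - (1/9) * d ^ 12 * P ^ 2) * hPdef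
    exact sub_eq_zero.mp ((mul_eq_zero.mp key).resolve_left
      (mul_ne_zero (pow_ne_zero 4 hd) (pow_ne_zero 6 hP)))
end

section
/- Let F be a field of characteristic zero, let d ≥ 2 be an integer, and let f, g ∈ F[X] be polynomials of degree d such that the coefficient of X^d in each of f and g is nonzero, the coefficient of X^{d−1} in each is zero, and the constant coefficient of each equals 1 (i.e. f and g have the normal form a_d X^d + a_{d−2}X^{d−2} + ⋯ + a₁X + 1). If α, β ∈ F with α ≠ 0 satisfy g(α·x + β) = α·f(x) + β for all x ∈ F (i.e. g∘φ = φ∘f for the affine map φ(x) = αx + β), then α = 1, β = 0, and f = g. (Two polynomials in this normal form are affine-conjugate only if they are equal.) -/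
open Polynomial

lemma iter_deriv_comp_linear {F : Type*} [CommRing F] (p : F[X]) (a b : F) (n : ℕ) :
    derivative^[n] (p.comp (C a * X + C b)) =
      C (a ^ n) * (derivative^[n] p).comp (C a * X + C b) := by
  induction n generalizing p with
  | zero => simp
  | succ n ih =>
      rw [Function.iterate_succ_apply, derivative_comp]
      simp only [derivative_add, derivative_C, derivative_mul, derivative_X, mul_one, zero_mul,
        add_zero, zero_add, mul_zero]
      rw [iterate_derivative_C_mul, ih, Function.iterate_succ_apply, pow_succ, C_mul]
      ring

/-- **Rigidity of the normal form `a_d X^d + a_{d−2}X^{d−2} + ⋯ + a₁X + 1`.**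
Over a field `F` of characteristic zero, if `f` and `g` are polynomials of degree
`d ≥ 2` with nonzero leading coefficient, vanishing coefficient in degree `d − 1`,
and constant term `1`, and if `g(αx + β) = α·f(x) + β` for all `x ∈ F` with `α ≠ 0`,
then `α = 1`, `β = 0`, and `f = g`. -/
theorem normal_form_affine_conjugate_iff_equal
    {F : Type*} [Field F] [CharZero F] (d : ℕ) (hd : 2 ≤ d)
    (f g : F[X])
    (hfdeg : f.natDegree = d) (hgdeg : g.natDegree = d)
    (hflead : f.coeff d ≠ 0) (hglead : g.coeff d ≠ 0)
    (hfsub : f.coeff (d - 1) = 0) (hgsub : g.coeff (d - 1) = 0)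
    (hfconst : f.coeff 0 = 1) (hgconst : g.coeff 0 = 1)
    (α β : F) (hα : α ≠ 0)
    (hconj : ∀ x : F, g.eval (α * x + β) = α * f.eval x + β) :
    α = 1 ∧ β = 0 ∧ f = g := by
  have hpoly : g.comp (C α * X + C β) = C α * f + C β := by
    apply Polynomial.funext
    intro x
    simp [eval_comp, hconj x]
  -- apply derivative^[d-1]
  have hder := congrArg (derivative^[d-1]) hpoly
  rw [iter_deriv_comp_linear] at hder
  have hCβ : derivative^[d-1] (C β : F[X]) = 0 :=
    iterate_derivative_eq_zero (by simp; omega)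
  have hadd : derivative^[d-1] (C α * f + C β) = C α * derivative^[d-1] f := by
    have : ∀ p q : F[X], derivative^[d-1] (p + q) = derivative^[d-1] p + derivative^[d-1] q := by
      intro p q
      induction (d-1) with
      | zero => simp
      | succ n ih => simp [Function.iterate_succ_apply', ih]
    rw [this, hCβ, add_zero, iterate_derivative_C_mul]
  rw [hadd] at hder
  -- q := derivative^[d-1] g is linear
  set q := derivative^[d-1] g with hq
  have hq0 : q.coeff 0 = 0 := by
    rw [hq, coeff_iterate_derivative, zero_add, hgsub, smul_zero]
  have hq1 : q.coeff 1 = (d.descFactorial (d-1) : F) * g.coeff d := by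
    rw [hq, coeff_iterate_derivative]
    have : 1 + (d - 1) = d := by omega
    rw [this, nsmul_eq_mul]
  have hf0 : (derivative^[d-1] f).coeff 0 = 0 := by
    rw [coeff_iterate_derivative, zero_add, hfsub, smul_zero]
  -- evaluate hder at 0
  have he := congrArg (eval 0) hder
  simp only [eval_mul, eval_C, eval_comp, eval_add, eval_X, mul_zero, zero_add] at he
  have hqdeg : q.degree ≤ 1 := by
    have := Polynomial.natDegree_iterate_derivative g (d-1)
    rw [hgdeg] at this
    have h1 : q.natDegree ≤ 1 := le_trans this (by omega)
    exact le_trans (degree_le_natDegree) (by exact_mod_cast h1)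
  have hqeq : q = C (q.coeff 1) * X + C (q.coeff 0) := eq_X_add_C_of_degree_le_one hqdeg
  have heβ : q.eval β = q.coeff 1 * β := by
    rw [hqeq]; simp [hq0]
  have hfe : (derivative^[d-1] f).eval 0 = 0 := by
    rw [← coeff_zero_eq_eval_zero, hf0]
  rw [heβ, hfe, mul_zero] at he
  have hdesc : (d.descFactorial (d-1) : F) ≠ 0 := by
    refine Nat.cast_ne_zero.mpr fun h => ?_
    exact absurd (Nat.descFactorial_eq_zero_iff_lt.mp h) (by omega)
  have hβ : β = 0 := by
    have hαpow : α ^ (d-1) ≠ 0 := pow_ne_zero _ hα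
    rw [hq1] at he
    rcases mul_eq_zero.mp he with h | h
    · exact absurd h hαpow
    rcases mul_eq_zero.mp h with h | h
    · rcases mul_eq_zero.mp h with h | h
      · exact absurd h hdesc
      · exact absurd h hglead
    · exact h
  have hα1 : α = 1 := by
    have h0 := hconj 0
    rw [mul_zero, zero_add, hβ, add_zero, ← coeff_zero_eq_eval_zero,
      ← coeff_zero_eq_eval_zero, hgconst, hfconst, mul_one] at h0
    exact h0.symm
  refine ⟨hα1, hβ, ?_⟩
  apply Polynomial.funext
  intro x
  have := hconj x
  rw [hα1, hβ] at this
  simpa using this.symm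
end
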